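/- arXiv:1910.13889 — 4 statements merged into one kernel-verified Lean document; each statement's English description precedes it below -/
import Mathlib

section
/- Under Assumptions 1 and 2, in the partial approach with θ_TX = θ0, if D_KL[L(θ0)||P(θ0^c)] > 0, then for every agent k the belief in the true hypothesis converges to one almost surely: lim_{i→∞} μ_{k,i}(θ0) = 1 almost surely. -/
open MeasureTheory ProbabilityTheory Filter
open scoped ENNReal NNReal

private lemma integral_comp_density {X Ω : Type*} [MeasurableSpace X] [MeasurableSpace Ω]
    (P : Measure Ω) (ν : Measure X) (ξf : Ω → X) (hξf : Measurable ξf)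
    (ρ : X → ℝ) (hρ : Measurable ρ) (hρpos : ∀ x, 0 ≤ ρ x)
    (hmap : P.map ξf = ν.withDensity (fun x => ENNReal.ofReal (ρ x)))
    (g : X → ℝ) (hg : Measurable g) :
    (Integrable (fun ω => g (ξf ω)) P ↔ Integrable (fun x => g x * ρ x) ν) ∧
      ∫ ω, g (ξf ω) ∂P = ∫ x, g x * ρ x ∂ν := by
  have hdm : Measurable fun x => ENNReal.ofReal (ρ x) := ENNReal.measurable_ofReal.comp hρ
  have hkey : (fun x => g x * (ENNReal.ofReal (ρ x)).toReal) = fun x => g x * ρ x := by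
    funext x; rw [ENNReal.toReal_ofReal (hρpos x)]
  have h1 : Integrable (fun ω => g (ξf ω)) P ↔ Integrable g (P.map ξf) :=
    (integrable_map_measure hg.aestronglyMeasurable hξf.aemeasurable).symm
  have h2 : Integrable g (P.map ξf) ↔ Integrable (fun x => g x * ρ x) ν := by
    rw [hmap, integrable_withDensity_iff hdm
      (Eventually.of_forall fun x => ENNReal.ofReal_lt_top), hkey]
  refine ⟨h1.trans h2, ?_⟩
  have h3 : ∫ ω, g (ξf ω) ∂P = ∫ x, g x ∂(P.map ξf) :=
    (integral_map hξf.aemeasurable hg.aestronglyMeasurable).symm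
  rw [h3, hmap]
  have e1 : ν.withDensity (fun x => ENNReal.ofReal (ρ x))
      = ν.withDensity (fun x => ((Real.toNNReal (ρ x) : ℝ≥0) : ℝ≥0∞)) := rfl
  rw [e1, integral_withDensity_eq_integral_smul (f := fun x => Real.toNNReal (ρ x))
    (measurable_real_toNNReal.comp hρ) g]
  refine integral_congr_ae (Eventually.of_forall fun x => ?_)
  simp only [NNReal.smul_def, smul_eq_mul, Real.coe_toNNReal _ (hρpos x)]
  ring

set_option maxHeartbeats 1000000 in
/-- Theorem 1, first part: truth learning in the partial approach.
Under positive initial beliefs (Assumption 1) and integrable log-likelihood ratios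
(Assumption 2), in the partial information-sharing approach with transmitted hypothesis
`θTX = θ0`, if `D_KL[L(θ0) ‖ P(θ0ᶜ)] > 0`, where `P(·|θ0ᶜ)` is the uniform average of the
likelihoods of the non-true hypotheses, then for every agent `k` the belief in the true
hypothesis converges to one almost surely. -/
theorem partial_approach_truth_learning
    {N : ℕ} (hN : 0 < N)
    {Θ : Type*} [Fintype Θ] [DecidableEq Θ] (hH : 2 ≤ Fintype.card Θ)
    -- the combination matrix: left-stochastic (columns sum to one) and primitive
    (A : Matrix (Fin N) (Fin N) ℝ)
    (hA_nonneg : ∀ ℓ k, 0 ≤ A ℓ k)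
    (hA_stoch : ∀ k, ∑ ℓ, A ℓ k = 1)
    (hA_prim : ∃ m : ℕ, ∀ ℓ k, 0 < (A ^ m) ℓ k)
    -- the observation space, dominating measure and positive likelihood densities
    {X : Type*} [MeasurableSpace X] (ν : Measure X) [SigmaFinite ν]
    (L : Θ → X → ℝ)
    (hL_meas : ∀ θ, Measurable (L θ))
    (hL_pos : ∀ θ x, 0 < L θ x)
    (hL_prob : ∀ θ, ∫ x, L θ x ∂ν = 1)
    -- the true hypothesis and the transmitted hypothesis
    (θ0 θTX : Θ) (hTX : θTX = θ0)
    -- the probability space and the observations: measurable, with the law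
    -- having density `L θ0` w.r.t. `ν`, i.i.d. across time and independent across agents
    {Ω : Type*} [MeasurableSpace Ω] (P : Measure Ω) [IsProbabilityMeasure P]
    (ξ : Fin N → ℕ → Ω → X)
    (hξ_meas : ∀ k i, Measurable (ξ k i))
    (hξ_dist : ∀ k i, P.map (ξ k i) = ν.withDensity (fun x => ENNReal.ofReal (L θ0 x)))
    (hξ_indep : iIndepFun (m := fun _ : Fin N × ℕ => (inferInstance : MeasurableSpace X))
      (fun p : Fin N × ℕ => ξ p.1 p.2) P)
    -- Assumption 2: integrable log-likelihood ratios (w.r.t. the law of the data)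
    (hint : ∀ θ θ' : Θ, Integrable (fun x => Real.log (L θ x / L θ' x) * L θ0 x) ν)
    -- the beliefs, intermediate beliefs and modified (partially shared) beliefs
    (μ ψ ψhat : Fin N → ℕ → Ω → Θ → ℝ)
    -- Assumption 1: positive initial beliefs
    (hμ0_pos : ∀ k ω θ, 0 < μ k 0 ω θ)
    (hμ0_sum : ∀ k ω, ∑ θ, μ k 0 ω θ = 1)
    -- the Bayesian update (Eq. (2)); `ψ k i` is the intermediate belief at time `i+1`
    (hψ : ∀ k i ω θ, ψ k i ω θ =
      μ k i ω θ * L θ (ξ k i ω) / ∑ θ', μ k i ω θ' * L θ' (ξ k i ω))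
    -- the modified beliefs (Eq. (3))
    (hψhat : ∀ k i ω θ, ψhat k i ω θ =
      if θ = θTX then ψ k i ω θ
      else (1 - ψ k i ω θTX) / ((Fintype.card Θ : ℝ) - 1))
    -- the log-linear combination step (Eq. (4))
    (hμ : ∀ k i ω θ, μ k (i + 1) ω θ =
      Real.exp (∑ ℓ, A ℓ k * Real.log (ψhat ℓ i ω θ)) /
        ∑ θ', Real.exp (∑ ℓ, A ℓ k * Real.log (ψhat ℓ i ω θ')))
    -- the condition `D_KL[L(θ0) ‖ P(θ0ᶜ)] > 0`
    (hD : 0 < ∫ x, Real.log (L θ0 x /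
        (((Fintype.card Θ : ℝ) - 1)⁻¹ * ∑ τ ∈ Finset.univ.erase θ0, L τ x)) * L θ0 x ∂ν) :
    -- conclusion: almost-sure convergence of the belief in the true hypothesis to one
    ∀ k, ∀ᵐ ω ∂P, Tendsto (fun i => μ k i ω θ0) atTop (nhds 1) := by
  classical
  intro k
  rw [hTX] at hψhat
  -- ## basic constants
  have hNN : (Finset.univ : Finset (Fin N)).Nonempty := ⟨⟨0, hN⟩, Finset.mem_univ _⟩
  have hNΘ : (Finset.univ : Finset Θ).Nonempty := Finset.card_pos.mp (by rw [Finset.card_univ]; omega)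
  set Hm1 : ℝ := (Fintype.card Θ : ℝ) - 1 with hHm1def
  have hHm1 : 1 ≤ Hm1 := by
    have : (2 : ℝ) ≤ (Fintype.card Θ : ℝ) := by exact_mod_cast hH
    rw [hHm1def]; linarith
  have hHm1pos : 0 < Hm1 := lt_of_lt_of_le one_pos hHm1
  obtain ⟨θb, hθb⟩ : ∃ θb : Θ, θb ≠ θ0 := Fintype.exists_ne_of_one_lt_card (by omega) θ0
  set E : Finset Θ := Finset.univ.erase θ0 with hEdef
  have hθbE : θb ∈ E := Finset.mem_erase.2 ⟨hθb, Finset.mem_univ _⟩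
  have hEcard : (E.card : ℝ) = Hm1 := by
    rw [hEdef, Finset.card_erase_of_mem (Finset.mem_univ _)]
    rw [hHm1def]
    have : 1 ≤ Fintype.card Θ := by omega
    push_cast [Finset.card_univ, this]
    ring
  -- ## the densities and the KL integrand
  set Pb : X → ℝ := fun x => Hm1⁻¹ * ∑ τ ∈ E, L τ x with hPbdef
  have hPb_pos : ∀ x, 0 < Pb x := by
    intro x
    exact mul_pos (inv_pos.2 hHm1pos)
      (Finset.sum_pos (fun τ _ => hL_pos τ x) ⟨θb, hθbE⟩)
  have hPb_meas : Measurable Pb := by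
    exact (measurable_const.mul (Finset.measurable_sum E fun τ _ => hL_meas τ))
  set f : X → ℝ := fun x => Real.log (L θ0 x / Pb x) with hfdef
  have hf_meas : Measurable f := Real.measurable_log.comp ((hL_meas θ0).div hPb_meas)
  set D : ℝ := ∫ x, f x * L θ0 x ∂ν with hDdef
  have hDpos : 0 < D := hD
  -- integrability of `f` and `|f|` against the true density
  have hL0_int : Integrable (fun x => L θ0 x) ν := by
    by_contra hcon
    have h0 := hL_prob θ0
    rw [integral_undef hcon] at h0
    norm_num at h0
  have hf_bound : ∀ x, |f x| ≤ Real.log Hm1 + ∑ τ ∈ E, |Real.log (L θ0 x / L τ x)| := by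
    intro x
    have hlogHm1 : 0 ≤ Real.log Hm1 := Real.log_nonneg hHm1
    have habs_le_sum : ∀ τ ∈ E, |Real.log (L θ0 x / L τ x)| ≤
        ∑ τ' ∈ E, |Real.log (L θ0 x / L τ' x)| := by
      intro τ hτ
      exact Finset.single_le_sum (f := fun τ' => |Real.log (L θ0 x / L τ' x)|)
        (fun τ' _ => abs_nonneg _) hτ
    rw [abs_le]
    constructor
    · -- lower bound : Pb x ≤ max likelihood
      obtain ⟨τs, hτs, hτs_max⟩ := E.exists_max_image (fun τ => L τ x) ⟨θb, hθbE⟩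
      have hPb_le : Pb x ≤ L τs x := by
        rw [hPbdef]
        have h1 : ∑ τ ∈ E, L τ x ≤ ∑ τ ∈ E, L τs x :=
          Finset.sum_le_sum fun τ hτ => hτs_max τ hτ
        have h2 : ∑ τ ∈ E, L τs x = Hm1 * L τs x := by
          rw [Finset.sum_const, nsmul_eq_mul, hEcard]
        calc Hm1⁻¹ * ∑ τ ∈ E, L τ x ≤ Hm1⁻¹ * (Hm1 * L τs x) := by
              apply mul_le_mul_of_nonneg_left _ (inv_nonneg.2 hHm1pos.le)
              rw [← h2]; exact h1
          _ = L τs x := by field_simp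
      have hf_ge : Real.log (L θ0 x / L τs x) ≤ f x := by
        rw [hfdef]
        apply Real.log_le_log (div_pos (hL_pos θ0 x) (hL_pos τs x))
        exact div_le_div_of_nonneg_left (hL_pos θ0 x).le (hPb_pos x) hPb_le
      have := habs_le_sum τs hτs
      have h3 : -(|Real.log (L θ0 x / L τs x)|) ≤ Real.log (L θ0 x / L τs x) := neg_abs_le _
      linarith
    · -- upper bound : Pb x ≥ Hm1⁻¹ * L θb x
      have hPb_ge : Hm1⁻¹ * L θb x ≤ Pb x := by
        rw [hPbdef]
        apply mul_le_mul_of_nonneg_left _ (inv_nonneg.2 hHm1pos.le)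
        exact Finset.single_le_sum (fun τ _ => (hL_pos τ x).le) hθbE
      have hf_le : f x ≤ Real.log (Hm1 * (L θ0 x / L θb x)) := by
        rw [hfdef]
        apply Real.log_le_log (div_pos (hL_pos θ0 x) (hPb_pos x))
        have h0 : 0 < Hm1⁻¹ * L θb x := mul_pos (inv_pos.2 hHm1pos) (hL_pos θb x)
        calc L θ0 x / Pb x ≤ L θ0 x / (Hm1⁻¹ * L θb x) :=
              div_le_div_of_nonneg_left (hL_pos θ0 x).le h0 hPb_ge
          _ = Hm1 * (L θ0 x / L θb x) := by
              rw [show Hm1⁻¹ * L θb x = L θb x / Hm1 by ring, div_div_eq_mul_div,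
                mul_comm (L θ0 x) Hm1, mul_div_assoc]
      have hsplit : Real.log (Hm1 * (L θ0 x / L θb x)) =
          Real.log Hm1 + Real.log (L θ0 x / L θb x) :=
        Real.log_mul hHm1pos.ne' (div_pos (hL_pos θ0 x) (hL_pos θb x)).ne'
      have h4 : Real.log (L θ0 x / L θb x) ≤ |Real.log (L θ0 x / L θb x)| := le_abs_self _
      have := habs_le_sum θb hθbE
      linarith
  have hfL_meas : Measurable fun x => f x * L θ0 x := hf_meas.mul (hL_meas θ0)
  have hfL_int : Integrable (fun x => f x * L θ0 x) ν := by
    apply Integrable.mono'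
      (g := fun x => (Real.log Hm1 + ∑ τ ∈ E, |Real.log (L θ0 x / L τ x)|) * L θ0 x)
    · have h1 : Integrable (fun x => Real.log Hm1 * L θ0 x) ν := hL0_int.const_mul _
      have h2 : Integrable (fun x => ∑ τ ∈ E, |Real.log (L θ0 x / L τ x)| * L θ0 x) ν := by
        apply integrable_finset_sum
        intro τ _
        have := (hint θ0 τ).abs
        apply this.congr
        refine Eventually.of_forall fun x => ?_
        simp only [abs_mul, abs_of_nonneg (hL_pos θ0 x).le]
      apply (h1.add h2).congr
      refine Eventually.of_forall fun x => ?_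
      simp only [Pi.add_apply]
      rw [add_mul, Finset.sum_mul]
    · exact hfL_meas.aestronglyMeasurable
    · refine Eventually.of_forall fun x => ?_
      rw [Real.norm_eq_abs, abs_mul, abs_of_nonneg (hL_pos θ0 x).le]
      exact mul_le_mul_of_nonneg_right (hf_bound x) (hL_pos θ0 x).le
  have hfaL_int : Integrable (fun x => |f x| * L θ0 x) ν := by
    apply hfL_int.abs.congr
    refine Eventually.of_forall fun x => ?_
    simp only [abs_mul, abs_of_nonneg (hL_pos θ0 x).le]
  set Ea : ℝ := ∫ x, |f x| * L θ0 x ∂ν with hEadef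
  have hEa_nonneg : 0 ≤ Ea := by
    rw [hEadef]
    apply integral_nonneg
    intro x
    exact mul_nonneg (abs_nonneg _) (hL_pos θ0 x).le
  -- ## positivity and normalization of beliefs at all times
  have hbase : ∀ i (k' : Fin N) ω, (∀ θ, 0 < μ k' i ω θ) ∧ (∑ θ, μ k' i ω θ) = 1 := by
    intro i
    induction i with
    | zero => exact fun k' ω => ⟨hμ0_pos k' ω, hμ0_sum k' ω⟩
    | succ i ih =>
      intro k' ω
      have hden : 0 < ∑ θ', Real.exp (∑ ℓ, A ℓ k' * Real.log (ψhat ℓ i ω θ')) :=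
        Finset.sum_pos (fun θ' _ => Real.exp_pos _) hNΘ
      constructor
      · intro θ
        rw [hμ]
        exact div_pos (Real.exp_pos _) hden
      · have : ∑ θ, μ k' (i+1) ω θ =
            (∑ θ, Real.exp (∑ ℓ, A ℓ k' * Real.log (ψhat ℓ i ω θ))) /
              ∑ θ', Real.exp (∑ ℓ, A ℓ k' * Real.log (ψhat ℓ i ω θ')) := by
          rw [Finset.sum_div]
          exact Finset.sum_congr rfl fun θ _ => hμ k' i ω θ
        rw [this, div_self hden.ne']
  have hpos : ∀ (k' : Fin N) i ω θ, 0 < μ k' i ω θ := fun k' i ω => (hbase i k' ω).1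
  have hsum : ∀ (k' : Fin N) i ω, ∑ θ, μ k' i ω θ = 1 := fun k' i ω => (hbase i k' ω).2
  have hlt1 : ∀ (k' : Fin N) i ω, μ k' i ω θ0 < 1 := by
    intro k' i ω
    have hs := hsum k' i ω
    rw [← Finset.add_sum_erase _ _ (Finset.mem_univ θ0)] at hs
    have hpos' : 0 < ∑ τ ∈ E, μ k' i ω τ :=
      Finset.sum_pos (fun τ _ => hpos k' i ω τ) ⟨θb, hθbE⟩
    rw [← hEdef] at hs
    linarith
  -- facts about the intermediate beliefs
  have hψden_pos : ∀ (k' : Fin N) i ω, 0 < ∑ θ', μ k' i ω θ' * L θ' (ξ k' i ω) := by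
    intro k' i ω
    exact Finset.sum_pos (fun θ' _ => mul_pos (hpos k' i ω θ') (hL_pos θ' _)) hNΘ
  have hψ_pos : ∀ (k' : Fin N) i ω θ, 0 < ψ k' i ω θ := by
    intro k' i ω θ
    rw [hψ]
    exact div_pos (mul_pos (hpos k' i ω θ) (hL_pos θ _)) (hψden_pos k' i ω)
  have hψ_lt1 : ∀ (k' : Fin N) i ω, ψ k' i ω θ0 < 1 := by
    intro k' i ω
    rw [hψ, div_lt_one (hψden_pos k' i ω)]
    exact Finset.single_lt_sum hθb (Finset.mem_univ θ0) (Finset.mem_univ θb)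
      (mul_pos (hpos k' i ω θb) (hL_pos θb _))
      (fun τ _ _ => (mul_pos (hpos k' i ω τ) (hL_pos τ _)).le)
  have hψhat_pos : ∀ (k' : Fin N) i ω θ, 0 < ψhat k' i ω θ := by
    intro k' i ω θ
    rw [hψhat]
    by_cases hθ : θ = θ0
    · rw [if_pos hθ, hθ]; exact hψ_pos k' i ω θ0
    · rw [if_neg hθ]
      exact div_pos (by linarith [hψ_lt1 k' i ω]) hHm1pos
  -- ## uniformity of the belief on the wrong hypotheses, from time 1 on
  have huni : ∀ (k' : Fin N) i ω θ, θ ≠ θ0 → μ k' (i+1) ω θ = (1 - μ k' (i+1) ω θ0) / Hm1 := by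
    intro k' i ω θ hθ
    have hcon : ∀ τ ∈ E, μ k' (i+1) ω τ = μ k' (i+1) ω θ := by
      intro τ hτ
      have hτ0 : τ ≠ θ0 := (Finset.mem_erase.1 hτ).1
      rw [hμ, hμ]
      have : ∀ ℓ, ψhat ℓ i ω τ = ψhat ℓ i ω θ := by
        intro ℓ
        rw [hψhat, hψhat, if_neg hτ0, if_neg hθ]
      simp_rw [this]
    have hs := hsum k' (i+1) ω
    rw [← Finset.add_sum_erase _ _ (Finset.mem_univ θ0), ← hEdef] at hs
    have hsum_eq : ∑ τ ∈ E, μ k' (i+1) ω τ = E.card • μ k' (i+1) ω θ :=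
      Finset.sum_eq_card_nsmul hcon
    rw [hsum_eq, nsmul_eq_mul] at hs
    rw [hEcard] at hs
    field_simp
    linarith
  -- ## the log-belief ratio and the log-likelihood statistic
  set lam : Fin N → ℕ → Ω → ℝ :=
    fun ℓ i ω => Real.log (μ ℓ i ω θ0 * Hm1 / (1 - μ ℓ i ω θ0)) with hlamdef
  set z : Fin N → ℕ → Ω → ℝ := fun ℓ i ω => f (ξ ℓ i ω) with hzdef
  have hexp_lam : ∀ (ℓ : Fin N) i ω,
      Real.exp (lam ℓ i ω) = μ ℓ i ω θ0 * Hm1 / (1 - μ ℓ i ω θ0) := by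
    intro ℓ i ω
    rw [hlamdef]
    exact Real.exp_log (div_pos (mul_pos (hpos ℓ i ω θ0) hHm1pos)
      (by linarith [hlt1 ℓ i ω]))
  have hμ_of_lam : ∀ (ℓ : Fin N) i ω,
      μ ℓ i ω θ0 = Real.exp (lam ℓ i ω) / (Real.exp (lam ℓ i ω) + Hm1) := by
    intro ℓ i ω
    rw [hexp_lam]
    have h1 : (0:ℝ) < 1 - μ ℓ i ω θ0 := by linarith [hlt1 ℓ i ω]
    have h2 : (0:ℝ) < μ ℓ i ω θ0 * Hm1 / (1 - μ ℓ i ω θ0) + Hm1 :=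
      add_pos (div_pos (mul_pos (hpos ℓ i ω θ0) hHm1pos) h1) hHm1pos
    rw [eq_div_iff h2.ne']
    have e : μ ℓ i ω θ0 * Hm1 / (1 - μ ℓ i ω θ0) + Hm1 = Hm1 / (1 - μ ℓ i ω θ0) := by
      rw [div_add' _ _ _ h1.ne']
      congr 1
      ring
    rw [e, mul_div_assoc']
  -- ## the key recursion for the log-belief ratio
  have hrec : ∀ (k' : Fin N) (n : ℕ) ω,
      lam k' (n+2) ω = ∑ ℓ, A ℓ k' * (lam ℓ (n+1) ω + z ℓ (n+1) ω) := by
    intro k' n ω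
    set i := n + 1 with hidef
    -- step 1 : express lam at time i+1 through the ratio of beliefs
    have h1 : μ k' (i+1) ω θb = (1 - μ k' (i+1) ω θ0) / Hm1 := huni k' i ω θb hθb
    have h1' : (0:ℝ) < 1 - μ k' (i+1) ω θ0 := by linarith [hlt1 k' (i+1) ω]
    have h2 : lam k' (i+1) ω = Real.log (μ k' (i+1) ω θ0 / μ k' (i+1) ω θb) := by
      rw [hlamdef, h1]
      congr 1
      field_simp
    -- step 2 : the ratio of beliefs via the update rule
    have hden : 0 < ∑ θ', Real.exp (∑ ℓ, A ℓ k' * Real.log (ψhat ℓ i ω θ')) :=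
      Finset.sum_pos (fun θ' _ => Real.exp_pos _) hNΘ
    have h3 : μ k' (i+1) ω θ0 / μ k' (i+1) ω θb =
        Real.exp (∑ ℓ, A ℓ k' * Real.log (ψhat ℓ i ω θ0)) /
          Real.exp (∑ ℓ, A ℓ k' * Real.log (ψhat ℓ i ω θb)) := by
      rw [hμ, hμ]
      rw [div_div_div_cancel_right₀ hden.ne']
    have h4 : lam k' (i+1) ω =
        ∑ ℓ, A ℓ k' * (Real.log (ψhat ℓ i ω θ0) - Real.log (ψhat ℓ i ω θb)) := by
      rw [h2, h3, Real.log_div (Real.exp_ne_zero _) (Real.exp_ne_zero _),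
        Real.log_exp, Real.log_exp, ← Finset.sum_sub_distrib]
      exact Finset.sum_congr rfl fun ℓ _ => by ring
    rw [h4]
    refine Finset.sum_congr rfl fun ℓ _ => ?_
    congr 1
    -- step 3 : per-agent computation of the log-ratio of the modified beliefs
    have e0 : ψhat ℓ i ω θ0 = ψ ℓ i ω θ0 := by rw [hψhat, if_pos rfl]
    have eb : ψhat ℓ i ω θb = (1 - ψ ℓ i ω θ0) / Hm1 := by
      rw [hψhat, if_neg hθb]
    have hS : 0 < ∑ θ', μ ℓ i ω θ' * L θ' (ξ ℓ i ω) := hψden_pos ℓ i ω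
    have hψval : ψ ℓ i ω θ0 =
        μ ℓ i ω θ0 * L θ0 (ξ ℓ i ω) / ∑ θ', μ ℓ i ω θ' * L θ' (ξ ℓ i ω) := hψ ℓ i ω θ0
    have hcompl : 1 - ψ ℓ i ω θ0 =
        (1 - μ ℓ i ω θ0) * Pb (ξ ℓ i ω) / ∑ θ', μ ℓ i ω θ' * L θ' (ξ ℓ i ω) := by
      have hrest : (∑ θ', μ ℓ i ω θ' * L θ' (ξ ℓ i ω)) - μ ℓ i ω θ0 * L θ0 (ξ ℓ i ω)
          = ∑ τ ∈ E, μ ℓ i ω τ * L τ (ξ ℓ i ω) := by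
        rw [← Finset.add_sum_erase _ _ (Finset.mem_univ θ0), ← hEdef]
        ring
      have hval : ∑ τ ∈ E, μ ℓ i ω τ * L τ (ξ ℓ i ω)
          = (1 - μ ℓ i ω θ0) * Pb (ξ ℓ i ω) := by
        have : ∀ τ ∈ E, μ ℓ i ω τ * L τ (ξ ℓ i ω)
            = (1 - μ ℓ i ω θ0) / Hm1 * L τ (ξ ℓ i ω) := by
          intro τ hτ
          rw [huni ℓ n ω τ (Finset.mem_erase.1 hτ).1]
        rw [Finset.sum_congr rfl this, ← Finset.mul_sum, hPbdef]
        ring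
      rw [hψval, eq_div_iff hS.ne', sub_mul, one_mul,
        div_mul_cancel₀ _ hS.ne', ← hval, ← hrest]
    have hx1 : (0:ℝ) < μ ℓ i ω θ0 * Hm1 / (1 - μ ℓ i ω θ0) :=
      div_pos (mul_pos (hpos ℓ i ω θ0) hHm1pos) (by linarith [hlt1 ℓ i ω])
    have hx2 : (0:ℝ) < L θ0 (ξ ℓ i ω) / Pb (ξ ℓ i ω) :=
      div_pos (hL_pos θ0 _) (hPb_pos _)
    have hval2 : ψhat ℓ i ω θ0 / ψhat ℓ i ω θb =
        (μ ℓ i ω θ0 * Hm1 / (1 - μ ℓ i ω θ0)) * (L θ0 (ξ ℓ i ω) / Pb (ξ ℓ i ω)) := by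
      rw [e0, eb, hcompl, hψval]
      have h5 : (0:ℝ) < 1 - μ ℓ i ω θ0 := by linarith [hlt1 ℓ i ω]
      set a : ℝ := μ ℓ i ω θ0 with hadef
      set S : ℝ := ∑ θ', μ ℓ i ω θ' * L θ' (ξ ℓ i ω) with hSdef2
      set b : ℝ := L θ0 (ξ ℓ i ω) with hbdef
      set q : ℝ := Pb (ξ ℓ i ω) with hqdef
      have hq : 0 < q := hPb_pos _
      have hb : 0 < b := hL_pos θ0 _
      field_simp
    have h6 : Real.log (ψhat ℓ i ω θ0) - Real.log (ψhat ℓ i ω θb)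
        = Real.log (ψhat ℓ i ω θ0 / ψhat ℓ i ω θb) :=
      (Real.log_div (hψhat_pos ℓ i ω θ0).ne' (hψhat_pos ℓ i ω θb).ne').symm
    rw [h6, hval2, Real.log_mul hx1.ne' hx2.ne', hlamdef, hzdef, hfdef]
  -- ## matrix power facts
  have hApow_nonneg : ∀ (p : ℕ) (ℓ k' : Fin N), 0 ≤ (A^p) ℓ k' := by
    intro p
    induction p with
    | zero =>
      intro ℓ k'
      rw [pow_zero, Matrix.one_apply]
      split <;> norm_num
    | succ p ih =>
      intro ℓ k'
      rw [pow_succ, Matrix.mul_apply]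
      exact Finset.sum_nonneg fun j _ => mul_nonneg (ih ℓ j) (hA_nonneg j k')
  have hApow_col : ∀ (p : ℕ) (k' : Fin N), ∑ ℓ, (A^p) ℓ k' = 1 := by
    intro p
    induction p with
    | zero =>
      intro k'
      simp [Matrix.one_apply]
    | succ p ih =>
      intro k'
      have h1 : ∀ ℓ : Fin N, (A^(p+1)) ℓ k' = ∑ j, (A^p) ℓ j * A j k' := by
        intro ℓ; rw [pow_succ, Matrix.mul_apply]
      simp_rw [h1]
      rw [Finset.sum_comm]
      have h2 : ∀ j : Fin N, ∑ ℓ, (A^p) ℓ j * A j k' = A j k' := by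
        intro j; rw [← Finset.sum_mul, ih j, one_mul]
      simp_rw [h2]
      exact hA_stoch k'
  have hApow_le1 : ∀ (p : ℕ) (ℓ k' : Fin N), (A^p) ℓ k' ≤ 1 := by
    intro p ℓ k'
    calc (A^p) ℓ k' ≤ ∑ j, (A^p) j k' :=
          Finset.single_le_sum (fun j _ => hApow_nonneg p j k') (Finset.mem_univ ℓ)
      _ = 1 := hApow_col p k'
  have hAadd : ∀ (p q : ℕ) (ℓ k' : Fin N),
      (A^(p+q)) ℓ k' = ∑ j, (A^p) ℓ j * (A^q) j k' := by
    intro p q ℓ k'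
    rw [pow_add, Matrix.mul_apply]
  -- primitivity with positive exponent
  obtain ⟨m0, hm0⟩ := hA_prim
  set m' : ℕ := m0 + 1 with hm'def
  have hm'pos : 0 < m' := Nat.succ_pos _
  have hm' : ∀ ℓ k', 0 < (A^m') ℓ k' := by
    intro ℓ k'
    rw [hm'def, hAadd m0 1 ℓ k']
    obtain ⟨j0, hj0⟩ : ∃ j0, 0 < A j0 k' := by
      by_contra hcon
      push_neg at hcon
      have h0 : ∑ j, A j k' = 0 := le_antisymm
        (Finset.sum_nonpos fun j _ => hcon j)
        (Finset.sum_nonneg fun j _ => hA_nonneg j k')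
      rw [hA_stoch k'] at h0
      norm_num at h0
    refine Finset.sum_pos' (fun j _ => mul_nonneg (hm0 ℓ j).le ?_) ⟨j0, Finset.mem_univ _, ?_⟩
    · rw [pow_one]; exact hA_nonneg j k'
    · rw [pow_one]; exact mul_pos (hm0 ℓ j0) hj0
  set c : ℝ := Finset.univ.inf' hNN
    (fun ℓ => Finset.univ.inf' hNN (fun k' => (A^m') ℓ k')) with hcdef
  have hc_pos : 0 < c := by
    rw [hcdef, Finset.lt_inf'_iff]
    intro ℓ _
    rw [Finset.lt_inf'_iff]
    intro k' _
    exact hm' ℓ k'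
  have hc_le : ∀ ℓ k', c ≤ (A^m') ℓ k' := by
    intro ℓ k'
    calc c ≤ Finset.univ.inf' hNN (fun k'' => (A^m') ℓ k'') :=
          Finset.inf'_le _ (Finset.mem_univ ℓ)
      _ ≤ (A^m') ℓ k' := Finset.inf'_le _ (Finset.mem_univ k')
  set ρ : ℝ := 1 - (N : ℝ) * c with hρdef
  have hNc_le1 : (N : ℝ) * c ≤ 1 := by
    have h1 : ∑ _j : Fin N, c ≤ ∑ j, (A^m') j ⟨0, hN⟩ :=
      Finset.sum_le_sum fun j _ => hc_le j _
    rw [hApow_col m'] at h1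
    rw [Finset.sum_const, Finset.card_univ, Fintype.card_fin, nsmul_eq_mul] at h1
    exact h1
  have hρ_nonneg : 0 ≤ ρ := by rw [hρdef]; linarith
  have hρ_lt1 : ρ < 1 := by
    rw [hρdef]
    have : 0 < (N : ℝ) * c := mul_pos (by exact_mod_cast hN) hc_pos
    linarith
  -- oscillation of the columns of the powers
  set Ms : ℕ → Fin N → ℝ := fun p ℓ => Finset.univ.sup' hNN (fun j => (A^p) ℓ j) with hMsdef
  set ms : ℕ → Fin N → ℝ := fun p ℓ => Finset.univ.inf' hNN (fun j => (A^p) ℓ j) with hmsdef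
  have hbetween : ∀ (p q : ℕ) (ℓ k' : Fin N),
      ms p ℓ ≤ (A^(p+q)) ℓ k' ∧ (A^(p+q)) ℓ k' ≤ Ms p ℓ := by
    intro p q ℓ k'
    rw [hAadd]
    constructor
    · calc ms p ℓ = ms p ℓ * ∑ j, (A^q) j k' := by rw [hApow_col q k', mul_one]
        _ = ∑ j, ms p ℓ * (A^q) j k' := by rw [Finset.mul_sum]
        _ ≤ ∑ j, (A^p) ℓ j * (A^q) j k' := by
            refine Finset.sum_le_sum fun j _ => ?_
            exact mul_le_mul_of_nonneg_right (Finset.inf'_le _ (Finset.mem_univ j))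
              (hApow_nonneg q j k')
    · calc ∑ j, (A^p) ℓ j * (A^q) j k' ≤ ∑ j, Ms p ℓ * (A^q) j k' := by
            refine Finset.sum_le_sum fun j _ => ?_
            exact mul_le_mul_of_nonneg_right (Finset.le_sup' _ (Finset.mem_univ j))
              (hApow_nonneg q j k')
        _ = Ms p ℓ * ∑ j, (A^q) j k' := by rw [Finset.mul_sum]
        _ = Ms p ℓ := by rw [hApow_col q k', mul_one]
  have hosc_anti : ∀ (p q : ℕ) (ℓ : Fin N), Ms (p+q) ℓ - ms (p+q) ℓ ≤ Ms p ℓ - ms p ℓ := by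
    intro p q ℓ
    have h1 : Ms (p+q) ℓ ≤ Ms p ℓ := by
      rw [hMsdef]
      exact Finset.sup'_le _ _ fun k' _ => (hbetween p q ℓ k').2
    have h2 : ms p ℓ ≤ ms (p+q) ℓ := by
      rw [hmsdef]
      exact Finset.le_inf' _ _ fun k' _ => (hbetween p q ℓ k').1
    linarith
  have hcontract : ∀ (q : ℕ) (ℓ : Fin N),
      Ms (q+m') ℓ - ms (q+m') ℓ ≤ ρ * (Ms q ℓ - ms q ℓ) := by
    intro q ℓ
    set T : ℝ := ∑ j, (A^q) ℓ j with hTdef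
    have hsplit : ∀ k' j : Fin N, (A^q) ℓ j * (A^m') j k'
        = (A^q) ℓ j * c + (A^q) ℓ j * ((A^m') j k' - c) := by intro k' j; ring
    have h2 : ∑ j, (A^q) ℓ j * c = c * T := by
      rw [hTdef, ← Finset.sum_mul]
      ring
    have hup : ∀ k', (A^(q+m')) ℓ k' ≤ c * T + ρ * Ms q ℓ := by
      intro k'
      rw [hAadd, Finset.sum_congr rfl fun j _ => hsplit k' j, Finset.sum_add_distrib, h2]
      have h3 : ∑ j, (A^q) ℓ j * ((A^m') j k' - c) ≤ ∑ j, Ms q ℓ * ((A^m') j k' - c) := by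
        refine Finset.sum_le_sum fun j _ => ?_
        exact mul_le_mul_of_nonneg_right (Finset.le_sup' _ (Finset.mem_univ j))
          (by linarith [hc_le j k'])
      have h4 : ∑ j, Ms q ℓ * ((A^m') j k' - c) = ρ * Ms q ℓ := by
        rw [← Finset.mul_sum, Finset.sum_sub_distrib, hApow_col m' k',
          Finset.sum_const, Finset.card_univ, Fintype.card_fin, nsmul_eq_mul, hρdef]
        ring
      linarith
    have hdown : ∀ k', c * T + ρ * ms q ℓ ≤ (A^(q+m')) ℓ k' := by
      intro k'
      rw [hAadd, Finset.sum_congr rfl fun j _ => hsplit k' j, Finset.sum_add_distrib, h2]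
      have h3 : ∑ j, ms q ℓ * ((A^m') j k' - c) ≤ ∑ j, (A^q) ℓ j * ((A^m') j k' - c) := by
        refine Finset.sum_le_sum fun j _ => ?_
        exact mul_le_mul_of_nonneg_right (Finset.inf'_le _ (Finset.mem_univ j))
          (by linarith [hc_le j k'])
      have h4 : ∑ j, ms q ℓ * ((A^m') j k' - c) = ρ * ms q ℓ := by
        rw [← Finset.mul_sum, Finset.sum_sub_distrib, hApow_col m' k',
          Finset.sum_const, Finset.card_univ, Fintype.card_fin, nsmul_eq_mul, hρdef]
        ring
      linarith
    have h5 : Ms (q+m') ℓ ≤ c * T + ρ * Ms q ℓ := by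
      rw [hMsdef]
      exact Finset.sup'_le _ _ fun k' _ => hup k'
    have h6 : c * T + ρ * ms q ℓ ≤ ms (q+m') ℓ := by
      rw [hmsdef]
      exact Finset.le_inf' _ _ fun k' _ => hdown k'
    have h7 : ρ * (Ms q ℓ - ms q ℓ) = ρ * Ms q ℓ - ρ * ms q ℓ := by ring
    linarith
  have hosc0 : ∀ ℓ, Ms 0 ℓ - ms 0 ℓ ≤ 1 := by
    intro ℓ
    have h1 : Ms 0 ℓ ≤ 1 := by
      rw [hMsdef]
      exact Finset.sup'_le _ _ fun j _ => hApow_le1 0 ℓ j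
    have h2 : 0 ≤ ms 0 ℓ := by
      rw [hmsdef]
      exact Finset.le_inf' _ _ fun j _ => hApow_nonneg 0 ℓ j
    linarith
  have hosc_geo : ∀ (q : ℕ) (ℓ : Fin N), Ms (q * m') ℓ - ms (q * m') ℓ ≤ ρ ^ q := by
    intro q ℓ
    induction q with
    | zero => simpa using hosc0 ℓ
    | succ q ih =>
      have h1 : (q+1) * m' = q * m' + m' := by ring
      rw [h1]
      calc Ms (q * m' + m') ℓ - ms (q * m' + m') ℓ ≤ ρ * (Ms (q * m') ℓ - ms (q * m') ℓ) :=
            hcontract (q * m') ℓ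
        _ ≤ ρ * ρ ^ q := mul_le_mul_of_nonneg_left ih hρ_nonneg
        _ = ρ ^ (q + 1) := by rw [pow_succ]; ring
  have hosc_le : ∀ (p : ℕ) (ℓ : Fin N), Ms p ℓ - ms p ℓ ≤ ρ ^ (p / m') := by
    intro p ℓ
    have h1 : p / m' * m' + p % m' = p := Nat.div_add_mod' p m'
    calc Ms p ℓ - ms p ℓ = Ms (p / m' * m' + p % m') ℓ - ms (p / m' * m' + p % m') ℓ := by
          rw [h1]
      _ ≤ Ms (p / m' * m') ℓ - ms (p / m' * m') ℓ := hosc_anti _ _ ℓ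
      _ ≤ ρ ^ (p / m') := hosc_geo _ ℓ
  -- ## strong law of large numbers, per agent
  have hchg := fun (ℓ : Fin N) (j : ℕ) (g : X → ℝ) (hg : Measurable g)
    => integral_comp_density P ν (ξ ℓ j) (hξ_meas ℓ j) (L θ0) (hL_meas θ0)
      (fun x => (hL_pos θ0 x).le) (hξ_dist ℓ j) g hg
  have hslln : ∀ ℓ : Fin N, ∀ᵐ ω ∂P,
      Tendsto (fun n : ℕ => (∑ j ∈ Finset.range n, z ℓ (j+1) ω) / n) atTop (nhds D) ∧
      Tendsto (fun n : ℕ => (∑ j ∈ Finset.range n, |z ℓ (j+1) ω|) / n) atTop (nhds Ea) := by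
    intro ℓ
    have hident : ∀ j j' : ℕ, IdentDistrib (ξ ℓ j) (ξ ℓ j') P P :=
      fun j j' => ⟨(hξ_meas ℓ j).aemeasurable, (hξ_meas ℓ j').aemeasurable,
        by rw [hξ_dist, hξ_dist]⟩
    have hindep : ∀ j j' : ℕ, j ≠ j' → IndepFun (ξ ℓ j) (ξ ℓ j') P := by
      intro j j' hjj'
      exact hξ_indep.indepFun (i := (ℓ, j)) (j := (ℓ, j')) (by simp [hjj'])
    have hz1 : ∀ᵐ ω ∂P,
        Tendsto (fun n : ℕ => (∑ j ∈ Finset.range n, z ℓ (j+1) ω) / n) atTop (nhds D) := by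
      have h0 := strong_law_ae_real (fun j ω => f (ξ ℓ (j+1) ω))
        (((hchg ℓ 1 f hf_meas).1).2 hfL_int)
        (fun j j' hjj' => (hindep (j+1) (j'+1) (by omega)).comp hf_meas hf_meas)
        (fun j => (hident (j+1) 1).comp hf_meas)
      have hmean : ∫ ω, f (ξ ℓ 1 ω) ∂P = D := by
        rw [(hchg ℓ 1 f hf_meas).2, hDdef]
      rw [hmean] at h0
      exact h0
    have hz2 : ∀ᵐ ω ∂P,
        Tendsto (fun n : ℕ => (∑ j ∈ Finset.range n, |z ℓ (j+1) ω|) / n) atTop (nhds Ea) := by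
      have hfabs : Measurable fun x => |f x| := hf_meas.abs
      have h0 := strong_law_ae_real (fun j ω => |f (ξ ℓ (j+1) ω)|)
        (((hchg ℓ 1 (fun x => |f x|) hfabs).1).2 hfaL_int)
        (fun j j' hjj' => (hindep (j+1) (j'+1) (by omega)).comp hfabs hfabs)
        (fun j => (hident (j+1) 1).comp hfabs)
      have hmean : ∫ ω, |f (ξ ℓ 1 ω)| ∂P = Ea := by
        rw [(hchg ℓ 1 (fun x => |f x|) hfabs).2, hEadef]
      rw [hmean] at h0
      exact h0
    exact hz1.and hz2
  have hae : ∀ᵐ ω ∂P, ∀ ℓ : Fin N,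
      Tendsto (fun n : ℕ => (∑ j ∈ Finset.range n, z ℓ (j+1) ω) / n) atTop (nhds D) ∧
      Tendsto (fun n : ℕ => (∑ j ∈ Finset.range n, |z ℓ (j+1) ω|) / n) atTop (nhds Ea) :=
    (MeasureTheory.ae_all_iff).2 hslln
  -- ## choice of the reference power p0 and of the weights u
  set EY : ℝ := (N : ℝ) * Ea with hEYdef
  obtain ⟨p0, hp0⟩ : ∃ p0 : ℕ, ρ ^ (p0 / m') * EY < D / 2 := by
    have h1 : Tendsto (fun p : ℕ => p / m') atTop atTop := by
      apply Filter.tendsto_atTop.2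
      intro b
      filter_upwards [Filter.eventually_ge_atTop (b * m')] with p hp
      exact Nat.le_div_iff_mul_le hm'pos |>.2 hp
    have h2 : Tendsto (fun q : ℕ => ρ ^ q * EY) atTop (nhds 0) := by
      have := (tendsto_pow_atTop_nhds_zero_of_lt_one hρ_nonneg hρ_lt1).mul_const EY
      simpa using this
    have h3 : Tendsto (fun p : ℕ => ρ ^ (p / m') * EY) atTop (nhds 0) := h2.comp h1
    have h4 : ∀ᶠ p : ℕ in atTop, ρ ^ (p / m') * EY < D / 2 :=
      h3.eventually (eventually_lt_nhds (by linarith : (0:ℝ) < D / 2))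
    exact h4.exists
  set ε0 : ℝ := ρ ^ (p0 / m') with hε0def
  have hε0_nonneg : 0 ≤ ε0 := pow_nonneg hρ_nonneg _
  set u : Fin N → ℝ := fun ℓ => (A^p0) ℓ ⟨0, hN⟩ with hudef
  have hu_nonneg : ∀ ℓ, 0 ≤ u ℓ := fun ℓ => hApow_nonneg p0 ℓ _
  have hu_le1 : ∀ ℓ, u ℓ ≤ 1 := fun ℓ => hApow_le1 p0 ℓ _
  have hu_sum : ∑ ℓ, u ℓ = 1 := hApow_col p0 _
  have hclose : ∀ p : ℕ, p0 ≤ p → ∀ ℓ, |(A^p) ℓ k - u ℓ| ≤ ε0 := by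
    intro p hp ℓ
    obtain ⟨q, rfl⟩ : ∃ q, p = p0 + q := ⟨p - p0, by omega⟩
    have h1 := hbetween p0 q ℓ k
    have h2 : ms p0 ℓ ≤ u ℓ :=
      Finset.inf'_le (fun k'' => (A^p0) ℓ k'') (Finset.mem_univ (⟨0, hN⟩ : Fin N))
    have h3 : u ℓ ≤ Ms p0 ℓ :=
      Finset.le_sup' (fun k'' => (A^p0) ℓ k'') (Finset.mem_univ (⟨0, hN⟩ : Fin N))
    have h4 := hosc_le p0 ℓ
    rw [abs_le]
    constructor <;> [skip; skip] <;> rw [hε0def] <;> push_cast <;>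
      [linarith [h1.1, h1.2]; linarith [h1.1, h1.2]]
  -- ## the pointwise (per ω) analysis
  filter_upwards [hae] with ω hω
  -- explicit representation of the log-belief ratios
  have hAmulstep : ∀ (p : ℕ) (w : Fin N → ℝ) (k' : Fin N),
      ∑ ℓ, A ℓ k' * (∑ j, (A^p) j ℓ * w j) = ∑ j, (A^(p+1)) j k' * w j := by
    intro p w k'
    simp_rw [Finset.mul_sum]
    rw [Finset.sum_comm]
    refine Finset.sum_congr rfl fun j _ => ?_
    rw [pow_succ, Matrix.mul_apply, Finset.sum_mul]
    exact Finset.sum_congr rfl fun ℓ _ => by ring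
  have hform : ∀ (n : ℕ) (k' : Fin N), lam k' (n+1) ω =
      (∑ ℓ, (A^n) ℓ k' * lam ℓ 1 ω)
        + ∑ j ∈ Finset.range n, ∑ ℓ, (A^(n-j)) ℓ k' * z ℓ (j+1) ω := by
    intro n
    induction n with
    | zero =>
      intro k'
      simp [Matrix.one_apply]
    | succ n ih =>
      intro k'
      rw [hrec k' n ω]
      have hsplit : ∑ ℓ, A ℓ k' * (lam ℓ (n+1) ω + z ℓ (n+1) ω)
          = (∑ ℓ, A ℓ k' * lam ℓ (n+1) ω) + ∑ ℓ, A ℓ k' * z ℓ (n+1) ω := by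
        rw [← Finset.sum_add_distrib]
        exact Finset.sum_congr rfl fun ℓ _ => by ring
      rw [hsplit]
      have hswap : ∀ g : Fin N → ℕ → ℝ,
          ∑ ℓ, A ℓ k' * ∑ t ∈ Finset.range n, g ℓ t
            = ∑ t ∈ Finset.range n, ∑ ℓ, A ℓ k' * g ℓ t := by
        intro g
        simp_rw [Finset.mul_sum]
        exact Finset.sum_comm
      have h1 : ∑ ℓ, A ℓ k' * lam ℓ (n+1) ω
          = (∑ j, (A^(n+1)) j k' * lam j 1 ω)
            + ∑ t ∈ Finset.range n, ∑ j, (A^(n+1-t)) j k' * z j (t+1) ω := by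
        simp_rw [ih]
        rw [Finset.sum_congr rfl fun ℓ _ => mul_add (A ℓ k') _ _, Finset.sum_add_distrib]
        congr 1
        · exact hAmulstep n (fun j => lam j 1 ω) k'
        · calc ∑ ℓ, A ℓ k' * ∑ t ∈ Finset.range n, ∑ j, (A^(n-t)) j ℓ * z j (t+1) ω
              = ∑ t ∈ Finset.range n, ∑ ℓ, A ℓ k' * ∑ j, (A^(n-t)) j ℓ * z j (t+1) ω :=
                hswap _
            _ = ∑ t ∈ Finset.range n, ∑ j, (A^(n+1-t)) j k' * z j (t+1) ω := by
                refine Finset.sum_congr rfl fun t ht => ?_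
                have ht' : t ≤ n := le_of_lt (Finset.mem_range.1 ht)
                have he : n + 1 - t = (n - t) + 1 := by omega
                rw [he]
                exact hAmulstep (n-t) (fun j => z j (t+1) ω) k'
      have h2 : ∑ ℓ, A ℓ k' * z ℓ (n+1) ω = ∑ j, (A^(n+1-n)) j k' * z j (n+1) ω := by
        refine Finset.sum_congr rfl fun j _ => ?_
        have he : n + 1 - n = 1 := by omega
        rw [he, pow_one]
      rw [h1, h2, Finset.sum_range_succ]
      ring
  -- notation for the relevant sums
  set U : ℕ → ℝ := fun j => ∑ ℓ, u ℓ * z ℓ j ω with hUdef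
  set Y : ℕ → ℝ := fun j => ∑ ℓ, |z ℓ j ω| with hYdef
  set SU : ℕ → ℝ := fun n => ∑ j ∈ Finset.range n, U (j+1) with hSUdef
  set R : ℕ → ℝ := fun n => ∑ j ∈ Finset.range n, Y (j+1) with hRdef
  have hY_nonneg : ∀ j, 0 ≤ Y j := fun j => Finset.sum_nonneg fun ℓ _ => abs_nonneg _
  have hR_mono : ∀ a b : ℕ, a ≤ b → R a ≤ R b := by
    intro a b hab
    rw [hRdef]
    exact Finset.sum_le_sum_of_subset_of_nonneg
      (Finset.range_subset_range.2 hab) (fun j _ _ => hY_nonneg (j+1))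
  -- limits of the empirical averages
  have hSU_lim : Tendsto (fun n : ℕ => SU n / n) atTop (nhds D) := by
    have h1 : ∀ n : ℕ, SU n / n = ∑ ℓ, u ℓ * ((∑ j ∈ Finset.range n, z ℓ (j+1) ω) / n) := by
      intro n
      simp only [hSUdef, hUdef]
      rw [Finset.sum_comm, Finset.sum_div]
      refine Finset.sum_congr rfl fun ℓ _ => ?_
      rw [← Finset.mul_sum, mul_div_assoc]
    simp_rw [h1]
    have h2 : Tendsto (fun n : ℕ => ∑ ℓ, u ℓ * ((∑ j ∈ Finset.range n, z ℓ (j+1) ω) / n))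
        atTop (nhds (∑ ℓ, u ℓ * D)) := by
      apply tendsto_finset_sum
      intro ℓ _
      exact ((hω ℓ).1).const_mul (u ℓ)
    have h3 : ∑ ℓ, u ℓ * D = D := by rw [← Finset.sum_mul, hu_sum, one_mul]
    rw [h3] at h2
    exact h2
  have hR_lim : Tendsto (fun n : ℕ => R n / n) atTop (nhds EY) := by
    have h1 : ∀ n : ℕ, R n / n = ∑ ℓ, (∑ j ∈ Finset.range n, |z ℓ (j+1) ω|) / n := by
      intro n
      simp only [hRdef, hYdef]
      rw [Finset.sum_comm, Finset.sum_div]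
    simp_rw [h1]
    have h2 : Tendsto (fun n : ℕ => ∑ ℓ, (∑ j ∈ Finset.range n, |z ℓ (j+1) ω|) / n)
        atTop (nhds (∑ _ℓ : Fin N, Ea)) := by
      apply tendsto_finset_sum
      intro ℓ _
      exact (hω ℓ).2
    have h3 : ∑ _ℓ : Fin N, Ea = EY := by
      rw [Finset.sum_const, Finset.card_univ, Fintype.card_fin, nsmul_eq_mul, hEYdef]
    rw [h3] at h2
    exact h2
  have hRshift_lim : Tendsto (fun n : ℕ => R (n - p0) / n) atTop (nhds EY) := by
    have h1 : Tendsto (fun n : ℕ => R (n - p0) / ((n : ℝ) - p0)) atTop (nhds EY) := by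
      have h0 : Tendsto (fun n : ℕ => R n / n) atTop (nhds EY) := hR_lim
      have hcomp := h0.comp (tendsto_sub_atTop_nat p0)
      apply hcomp.congr'
      filter_upwards [Filter.eventually_ge_atTop p0] with n hn
      simp only [Function.comp]
      rw [Nat.cast_sub hn]
    have h2 : Tendsto (fun n : ℕ => ((n : ℝ) - p0) / n) atTop (nhds 1) := by
      have h3 : Tendsto (fun n : ℕ => 1 - (p0 : ℝ) / n) atTop (nhds (1 - 0)) :=
        tendsto_const_nhds.sub (tendsto_const_div_atTop_nhds_zero_nat _)
      rw [sub_zero] at h3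
      apply h3.congr'
      filter_upwards [Filter.eventually_ge_atTop 1] with n hn
      have hn' : (n : ℝ) ≠ 0 := by positivity
      field_simp
    have h4 := h1.mul h2
    rw [mul_one] at h4
    apply h4.congr'
    filter_upwards [Filter.eventually_ge_atTop (p0 + 1)] with n hn
    have hn0 : ((n : ℝ) - p0) ≠ 0 := by
      have : (p0 : ℝ) + 1 ≤ (n : ℝ) := by exact_mod_cast hn
      linarith
    field_simp
  -- bounds on the terms of the representation
  set C : ℝ := Finset.univ.sup' hNN fun ℓ => |lam ℓ 1 ω| with hCdef
  have hlam_lb : ∀ n : ℕ, p0 ≤ n →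
      (-C) + (SU n - ε0 * R n) - 2 * (R n - R (n - p0)) ≤ lam k (n+1) ω := by
    intro n hn
    rw [hform n k]
    have hterm1 : -C ≤ ∑ ℓ, (A^n) ℓ k * lam ℓ 1 ω := by
      calc -C = ∑ ℓ, (A^n) ℓ k * (-C) := by
            rw [← Finset.sum_mul, hApow_col n k, one_mul]
        _ ≤ ∑ ℓ, (A^n) ℓ k * lam ℓ 1 ω := by
            refine Finset.sum_le_sum fun ℓ _ => ?_
            apply mul_le_mul_of_nonneg_left _ (hApow_nonneg n ℓ k)
            have h5 : |lam ℓ 1 ω| ≤ C :=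
              Finset.le_sup' (fun ℓ' => |lam ℓ' 1 ω|) (Finset.mem_univ ℓ)
            have := neg_abs_le (lam ℓ 1 ω)
            linarith
    have hterm2 : ∀ j ∈ Finset.range n,
        (U (j+1) - ε0 * Y (j+1)) - (if n < j + p0 then 2 * Y (j+1) else 0)
          ≤ ∑ ℓ, (A^(n-j)) ℓ k * z ℓ (j+1) ω := by
      intro j hj
      have hjn : j < n := Finset.mem_range.1 hj
      by_cases hcase : n < j + p0
      · -- crude bound
        rw [if_pos hcase]
        have hb1 : |∑ ℓ, (A^(n-j)) ℓ k * z ℓ (j+1) ω| ≤ Y (j+1) := by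
          calc |∑ ℓ, (A^(n-j)) ℓ k * z ℓ (j+1) ω| ≤ ∑ ℓ, |(A^(n-j)) ℓ k * z ℓ (j+1) ω| :=
                Finset.abs_sum_le_sum_abs _ _
            _ ≤ ∑ ℓ, |z ℓ (j+1) ω| := by
                refine Finset.sum_le_sum fun ℓ _ => ?_
                rw [abs_mul]
                calc |(A^(n-j)) ℓ k| * |z ℓ (j+1) ω| ≤ 1 * |z ℓ (j+1) ω| := by
                      apply mul_le_mul_of_nonneg_right _ (abs_nonneg _)
                      rw [abs_of_nonneg (hApow_nonneg _ ℓ k)]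
                      exact hApow_le1 _ ℓ k
                  _ = |z ℓ (j+1) ω| := one_mul _
            _ = Y (j+1) := by rw [hYdef]
        have hb2 : |U (j+1)| ≤ Y (j+1) := by
          calc |U (j+1)| ≤ ∑ ℓ, |u ℓ * z ℓ (j+1) ω| := Finset.abs_sum_le_sum_abs _ _
            _ ≤ ∑ ℓ, |z ℓ (j+1) ω| := by
                refine Finset.sum_le_sum fun ℓ _ => ?_
                rw [abs_mul]
                calc |u ℓ| * |z ℓ (j+1) ω| ≤ 1 * |z ℓ (j+1) ω| := by
                      apply mul_le_mul_of_nonneg_right _ (abs_nonneg _)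
                      rw [abs_of_nonneg (hu_nonneg ℓ)]
                      exact hu_le1 ℓ
                  _ = |z ℓ (j+1) ω| := one_mul _
            _ = Y (j+1) := by rw [hYdef]
        have h6 := neg_abs_le (∑ ℓ, (A^(n-j)) ℓ k * z ℓ (j+1) ω)
        have h7 := le_abs_self (U (j+1))
        have h8 : 0 ≤ ε0 * Y (j+1) := mul_nonneg hε0_nonneg (hY_nonneg _)
        linarith
      · -- accurate bound using the closeness of the weights
        rw [if_neg hcase]
        have hp : p0 ≤ n - j := by omega
        have hdiff : |∑ ℓ, (A^(n-j)) ℓ k * z ℓ (j+1) ω - U (j+1)| ≤ ε0 * Y (j+1) := by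
          rw [hUdef]
          simp only
          rw [← Finset.sum_sub_distrib]
          calc |∑ ℓ, ((A^(n-j)) ℓ k * z ℓ (j+1) ω - u ℓ * z ℓ (j+1) ω)|
              ≤ ∑ ℓ, |(A^(n-j)) ℓ k * z ℓ (j+1) ω - u ℓ * z ℓ (j+1) ω| :=
                Finset.abs_sum_le_sum_abs _ _
            _ ≤ ∑ ℓ, ε0 * |z ℓ (j+1) ω| := by
                refine Finset.sum_le_sum fun ℓ _ => ?_
                have h9 : (A^(n-j)) ℓ k * z ℓ (j+1) ω - u ℓ * z ℓ (j+1) ω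
                    = ((A^(n-j)) ℓ k - u ℓ) * z ℓ (j+1) ω := by ring
                rw [h9, abs_mul]
                exact mul_le_mul_of_nonneg_right (hclose (n-j) hp ℓ) (abs_nonneg _)
            _ = ε0 * Y (j+1) := by rw [hYdef, ← Finset.mul_sum]
        have h10 := (abs_le.1 hdiff).1
        simp only [sub_zero]
        linarith
    have hsum2 : ∑ j ∈ Finset.range n,
        ((U (j+1) - ε0 * Y (j+1)) - (if n < j + p0 then 2 * Y (j+1) else 0))
          ≤ ∑ j ∈ Finset.range n, ∑ ℓ, (A^(n-j)) ℓ k * z ℓ (j+1) ω :=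
      Finset.sum_le_sum hterm2
    have hsplit2 : ∑ j ∈ Finset.range n,
        ((U (j+1) - ε0 * Y (j+1)) - (if n < j + p0 then 2 * Y (j+1) else 0))
          = (SU n - ε0 * R n) - ∑ j ∈ Finset.range n, (if n < j + p0 then 2 * Y (j+1) else 0) := by
      simp only [hSUdef, hRdef]
      rw [Finset.sum_sub_distrib, Finset.sum_sub_distrib, Finset.mul_sum]
    have hbad : ∑ j ∈ Finset.range n, (if n < j + p0 then 2 * Y (j+1) else 0)
        ≤ 2 * (R n - R (n - p0)) := by
      have hstep1 : ∑ j ∈ Finset.range n, (if n < j + p0 then 2 * Y (j+1) else 0)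
          = ∑ j ∈ (Finset.range n).filter (fun j => n < j + p0), 2 * Y (j+1) :=
        (Finset.sum_filter _ _).symm
      have hstep2 : (Finset.range n).filter (fun j => n < j + p0) ⊆ Finset.Ico (n - p0) n := by
        intro j hjmem
        obtain ⟨hj1, hj2⟩ := Finset.mem_filter.1 hjmem
        have hj1' : j < n := Finset.mem_range.1 hj1
        exact Finset.mem_Ico.2 ⟨by omega, hj1'⟩
      have hstep3 : ∑ j ∈ (Finset.range n).filter (fun j => n < j + p0), 2 * Y (j+1)
          ≤ ∑ j ∈ Finset.Ico (n - p0) n, 2 * Y (j+1) :=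
        Finset.sum_le_sum_of_subset_of_nonneg hstep2
          (fun j _ _ => mul_nonneg (by norm_num) (hY_nonneg _))
      have hstep4 : ∑ j ∈ Finset.Ico (n - p0) n, 2 * Y (j+1) = 2 * (R n - R (n - p0)) := by
        rw [Finset.sum_Ico_eq_sub _ (Nat.sub_le n p0)]
        rw [hRdef]
        simp only
        rw [← Finset.mul_sum, ← Finset.mul_sum]
        ring
      rw [hstep1]
      calc ∑ j ∈ (Finset.range n).filter (fun j => n < j + p0), 2 * Y (j+1)
          ≤ ∑ j ∈ Finset.Ico (n - p0) n, 2 * Y (j+1) := hstep3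
        _ = 2 * (R n - R (n - p0)) := hstep4
    linarith
  -- ## conclusion: the log-belief ratio diverges, hence the belief converges to one
  set D' : ℝ := D - ε0 * EY with hD'def
  have hD'pos : 0 < D' := by
    have h1 : ε0 * EY < D / 2 := hp0
    rw [hD'def]
    linarith
  have hQlim : Tendsto
      (fun n : ℕ => ((-C) + (SU n - ε0 * R n) - 2 * (R n - R (n - p0))) / n)
      atTop (nhds D') := by
    have h1 : Tendsto (fun n : ℕ => -C / n) atTop (nhds 0) :=
      tendsto_const_div_atTop_nhds_zero_nat _
    have h3 := hR_lim.const_mul ε0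
    have h4 := (hR_lim.sub hRshift_lim).const_mul (2:ℝ)
    have h5 := (h1.add (hSU_lim.sub h3)).sub h4
    have h6 : (0 + (D - ε0 * EY) - 2 * (EY - EY)) = D' := by rw [hD'def]; ring
    rw [h6] at h5
    exact Tendsto.congr (fun n => by ring) h5
  have hlam_top : Tendsto (fun n : ℕ => lam k (n+1) ω) atTop atTop := by
    apply tendsto_atTop_mono' atTop ?_
      ((tendsto_natCast_atTop_atTop (R := ℝ)).atTop_mul_const (half_pos hD'pos))
    have hev := hQlim.eventually (eventually_gt_nhds (half_lt_self hD'pos))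
    filter_upwards [hev, Filter.eventually_ge_atTop p0, Filter.eventually_ge_atTop 1]
      with n h1 h2 h3
    have hn0 : (0:ℝ) < n := by exact_mod_cast h3
    have h4 := hlam_lb n h2
    have h5 : (n:ℝ) * (D'/2) ≤ (-C) + (SU n - ε0 * R n) - 2 * (R n - R (n - p0)) := by
      rw [mul_comm]
      exact (le_div_iff₀ hn0).1 h1.le
    linarith
  have hexp_top : Tendsto (fun n : ℕ => Real.exp (lam k (n+1) ω)) atTop atTop :=
    Real.tendsto_exp_atTop.comp hlam_top
  have hratio : Tendsto (fun t : ℝ => t / (t + Hm1)) atTop (nhds 1) := by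
    have h1 : Tendsto (fun t : ℝ => t + Hm1) atTop atTop :=
      tendsto_atTop_add_const_right _ _ tendsto_id
    have h2 : Tendsto (fun t : ℝ => Hm1 / (t + Hm1)) atTop (nhds 0) :=
      Tendsto.div_atTop tendsto_const_nhds h1
    have h4 : Tendsto (fun t : ℝ => 1 - Hm1 / (t + Hm1)) atTop (nhds (1 - 0)) :=
      tendsto_const_nhds.sub h2
    rw [sub_zero] at h4
    apply h4.congr'
    filter_upwards [Filter.eventually_gt_atTop 0] with t ht
    have hne : t + Hm1 ≠ 0 := by positivity
    field_simp
    ring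
  have hμlim : Tendsto (fun n : ℕ => μ k (n+1) ω θ0) atTop (nhds 1) := by
    have h5 := hratio.comp hexp_top
    apply h5.congr
    intro n
    simp only [Function.comp]
    exact (hμ_of_lam k (n+1) ω).symm
  exact (tendsto_add_atTop_iff_nat 1).1 hμlim
end

section
/- (Log-belief-ratio recursion, Eq. (10)) In the partial approach, at any time i ≥ 1 such that the beliefs at time i−1 satisfy μ_{ℓ,i−1}(τ) = μ_{ℓ,i−1}(τ′) for every agent ℓ and every pair τ, τ′ ≠ θ_TX, it holds for every agent k and every θ ≠ θ_TX that log(μ_{k,i}(θ)/μ_{k,i}(θ_TX)) = Σ_{ℓ=1}^N a_{ℓk} [ log(μ_{ℓ,i−1}(θ)/μ_{ℓ,i−1}(θ_TX)) + log(P(ξ_{ℓ,i}|θ_TX^c)/L(ξ_{ℓ,i}|θ_TX)) ], where P(ξ|θ_TX^c) ≜ (1/(H−1)) Σ_{τ≠θ_TX} L(ξ|τ). -/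
open Finset

/-- Eq. (10): log-belief-ratio recursion in the partial approach.
In the partial approach, at any time step where the previous beliefs agree on all
non-transmitted hypotheses, for every agent `k` and every `θ ≠ θTX`:
`log(μnew_k(θ)/μnew_k(θTX)) = ∑_ℓ a_(ℓk) [log(μprev_ℓ(θ)/μprev_ℓ(θTX))
  + log(P(ξ_ℓ|θTXᶜ)/L(ξ_ℓ|θTX))]`, where `P(ξ|θTXᶜ) = (1/(H−1)) ∑_(τ≠θTX) L(ξ|τ)`.
This is a deterministic identity holding for every realization of the observations. -/
theorem partial_approach_log_ratio_recursion
    {N : ℕ} (hN : 0 < N)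
    {Θ : Type*} [Fintype Θ] [DecidableEq Θ] (hH : 2 ≤ Fintype.card Θ)
    (A : Matrix (Fin N) (Fin N) ℝ)
    (hA_nonneg : ∀ ℓ k, 0 ≤ A ℓ k)
    (hA_stoch : ∀ k, ∑ ℓ, A ℓ k = 1)
    {X : Type*} (L : Θ → X → ℝ) (hL_pos : ∀ θ x, 0 < L θ x)
    -- the observations received by the agents at the current time instant
    (ξ : Fin N → X)
    (θTX : Θ)
    -- previous beliefs, intermediate beliefs, modified beliefs and new beliefs
    (μprev : Fin N → Θ → ℝ) (ψ ψhat μnew : Fin N → Θ → ℝ)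
    (hμprev_pos : ∀ ℓ θ, 0 < μprev ℓ θ)
    (hμprev_sum : ∀ ℓ, ∑ θ, μprev ℓ θ = 1)
    -- the previous beliefs agree on all non-transmitted hypotheses
    (hμprev_eq : ∀ ℓ, ∀ τ τ' : Θ, τ ≠ θTX → τ' ≠ θTX → μprev ℓ τ = μprev ℓ τ')
    (hψ : ∀ ℓ θ, ψ ℓ θ = μprev ℓ θ * L θ (ξ ℓ) / ∑ θ', μprev ℓ θ' * L θ' (ξ ℓ))
    (hψhat : ∀ ℓ θ, ψhat ℓ θ =
      if θ = θTX then ψ ℓ θ else (1 - ψ ℓ θTX) / ((Fintype.card Θ : ℝ) - 1))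
    (hμnew : ∀ k θ, μnew k θ =
      Real.exp (∑ ℓ, A ℓ k * Real.log (ψhat ℓ θ)) /
        ∑ θ', Real.exp (∑ ℓ, A ℓ k * Real.log (ψhat ℓ θ'))) :
    ∀ k, ∀ θ, θ ≠ θTX →
      Real.log (μnew k θ / μnew k θTX) =
        ∑ ℓ, A ℓ k * (Real.log (μprev ℓ θ / μprev ℓ θTX) +
          Real.log ((((Fintype.card Θ : ℝ) - 1)⁻¹ * ∑ τ ∈ Finset.univ.erase θTX, L τ (ξ ℓ)) /
            L θTX (ξ ℓ))) := by

  intro k θ hθ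
  have hΘne : Nonempty Θ := Fintype.card_pos_iff.mp (by omega)
  have hH1 : (1:ℝ) < (Fintype.card Θ : ℝ) := by exact_mod_cast lt_of_lt_of_le one_lt_two hH
  have hHm1 : (0:ℝ) < (Fintype.card Θ : ℝ) - 1 := by linarith
  -- positivity of the per-agent normalization
  have hS : ∀ ℓ, 0 < ∑ θ', μprev ℓ θ' * L θ' (ξ ℓ) := fun ℓ =>
    Finset.sum_pos (fun τ _ => mul_pos (hμprev_pos ℓ τ) (hL_pos τ (ξ ℓ)))
      Finset.univ_nonempty
  have hT : ∀ ℓ, 0 < ∑ τ ∈ Finset.univ.erase θTX, L τ (ξ ℓ) := fun ℓ =>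
    Finset.sum_pos (fun τ _ => hL_pos τ (ξ ℓ)) ⟨θ, Finset.mem_erase.mpr ⟨hθ, Finset.mem_univ θ⟩⟩
  -- key values of ψhat
  have hψhatTX : ∀ ℓ, ψhat ℓ θTX =
      μprev ℓ θTX * L θTX (ξ ℓ) / ∑ θ', μprev ℓ θ' * L θ' (ξ ℓ) := by
    intro ℓ; rw [hψhat, if_pos rfl, hψ]
  have hone : ∀ ℓ, 1 - ψ ℓ θTX =
      (μprev ℓ θ * ∑ τ ∈ Finset.univ.erase θTX, L τ (ξ ℓ)) / ∑ θ', μprev ℓ θ' * L θ' (ξ ℓ) := by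
    intro ℓ
    rw [hψ]
    rw [eq_div_iff (ne_of_gt (hS ℓ))]
    have hsplit : ∑ θ', μprev ℓ θ' * L θ' (ξ ℓ)
        = μprev ℓ θTX * L θTX (ξ ℓ) + ∑ τ ∈ Finset.univ.erase θTX, μprev ℓ τ * L τ (ξ ℓ) :=
      (Finset.add_sum_erase Finset.univ _ (Finset.mem_univ θTX)).symm
    have herase : ∑ τ ∈ Finset.univ.erase θTX, μprev ℓ τ * L τ (ξ ℓ)
        = μprev ℓ θ * ∑ τ ∈ Finset.univ.erase θTX, L τ (ξ ℓ) := by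
      rw [Finset.mul_sum]
      refine Finset.sum_congr rfl (fun τ hτ => ?_)
      rw [hμprev_eq ℓ τ θ (Finset.mem_erase.mp hτ).1 hθ]
    rw [sub_mul, one_mul, div_mul_cancel₀ _ (ne_of_gt (hS ℓ))]
    linarith [hsplit, herase]
  have hψhatθ : ∀ ℓ, ψhat ℓ θ =
      (μprev ℓ θ * ∑ τ ∈ Finset.univ.erase θTX, L τ (ξ ℓ)) /
        ((∑ θ', μprev ℓ θ' * L θ' (ξ ℓ)) * ((Fintype.card Θ : ℝ) - 1)) := by
    intro ℓ
    rw [hψhat, if_neg hθ, hone, div_div]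
  -- pointwise identity for the log differences
  have hpoint : ∀ ℓ, Real.log (ψhat ℓ θ) - Real.log (ψhat ℓ θTX) =
      Real.log (μprev ℓ θ / μprev ℓ θTX) +
        Real.log ((((Fintype.card Θ : ℝ) - 1)⁻¹ * ∑ τ ∈ Finset.univ.erase θTX, L τ (ξ ℓ)) /
          L θTX (ξ ℓ)) := by
    intro ℓ
    have ha := hμprev_pos ℓ θ
    have hb := hμprev_pos ℓ θTX
    have hc := hL_pos θTX (ξ ℓ)
    have ht := hT ℓ
    have hs := hS ℓ
    rw [hψhatθ, hψhatTX]
    rw [Real.log_div (by positivity) (by positivity),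
        Real.log_div (by positivity) (by positivity),
        Real.log_div (by positivity) (by positivity),
        Real.log_div (by positivity) (by positivity),
        Real.log_mul (by positivity) (by positivity),
        Real.log_mul (by positivity) (by positivity),
        Real.log_mul (by positivity) (by positivity),
        Real.log_mul (by positivity) (by positivity),
        Real.log_inv]
    ring
  -- positivity / nonvanishing of the new-belief normalization
  have hZ : (0:ℝ) < ∑ θ', Real.exp (∑ ℓ, A ℓ k * Real.log (ψhat ℓ θ')) :=
    Finset.sum_pos (fun τ _ => Real.exp_pos _) Finset.univ_nonempty
  have hdiv : μnew k θ / μnew k θTX =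
      Real.exp ((∑ ℓ, A ℓ k * Real.log (ψhat ℓ θ)) - ∑ ℓ, A ℓ k * Real.log (ψhat ℓ θTX)) := by
    rw [hμnew, hμnew, Real.exp_sub]
    rw [div_div_div_comm, div_self (ne_of_gt hZ), div_one]
  rw [hdiv, Real.log_exp, ← Finset.sum_sub_distrib]
  refine Finset.sum_congr rfl (fun ℓ _ => ?_)
  rw [← mul_sub, hpoint ℓ]
end

section
/- (Self-aware recursion for non-transmitted hypotheses, Eq. (22)) In the self-aware partial approach, for every agent k, every time i ≥ 1, and every pair θ, θ′ with θ ≠ θ_TX, θ′ ≠ θ_TX, it holds that log(μ_{k,i}(θ)/μ_{k,i}(θ′)) = a_{kk} log(μ_{k,i−1}(θ)/μ_{k,i−1}(θ′)) + a_{kk} log(L(ξ_{k,i}|θ)/L(ξ_{k,i}|θ′)). -/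
open Finset

/-- Eq. (22): self-aware recursion for non-transmitted hypotheses.
In the self-aware partial approach, for every agent `k` and every pair `θ, θ' ≠ θTX`:
`log(μnew_k(θ)/μnew_k(θ')) = a_(kk) log(μprev_k(θ)/μprev_k(θ'))
  + a_(kk) log(L(ξ_k|θ)/L(ξ_k|θ'))`.
This is a deterministic identity holding for every realization of the observations. -/
theorem self_aware_log_ratio_recursion
    {N : ℕ} (hN : 0 < N)
    {Θ : Type*} [Fintype Θ] [DecidableEq Θ] (hH : 2 ≤ Fintype.card Θ)
    (A : Matrix (Fin N) (Fin N) ℝ)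
    (hA_nonneg : ∀ ℓ k, 0 ≤ A ℓ k)
    (hA_stoch : ∀ k, ∑ ℓ, A ℓ k = 1)
    {X : Type*} (L : Θ → X → ℝ) (hL_pos : ∀ θ x, 0 < L θ x)
    -- the observations received by the agents at the current time instant
    (ξ : Fin N → X)
    (θTX : Θ)
    -- previous beliefs, intermediate beliefs, modified beliefs and new beliefs
    (μprev : Fin N → Θ → ℝ) (ψ ψhat μnew : Fin N → Θ → ℝ)
    (hμprev_pos : ∀ ℓ θ, 0 < μprev ℓ θ)
    (hμprev_sum : ∀ ℓ, ∑ θ, μprev ℓ θ = 1)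
    (hψ : ∀ ℓ θ, ψ ℓ θ = μprev ℓ θ * L θ (ξ ℓ) / ∑ θ', μprev ℓ θ' * L θ' (ξ ℓ))
    (hψhat : ∀ ℓ θ, ψhat ℓ θ =
      if θ = θTX then ψ ℓ θ else (1 - ψ ℓ θTX) / ((Fintype.card Θ : ℝ) - 1))
    -- the self-aware combination step (Eq. (5))
    (hμnew : ∀ k θ, μnew k θ =
      Real.exp (A k k * Real.log (ψ k θ) +
          ∑ ℓ ∈ Finset.univ.erase k, A ℓ k * Real.log (ψhat ℓ θ)) /
        ∑ θ', Real.exp (A k k * Real.log (ψ k θ') +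
          ∑ ℓ ∈ Finset.univ.erase k, A ℓ k * Real.log (ψhat ℓ θ'))) :
    ∀ k, ∀ θ θ' : Θ, θ ≠ θTX → θ' ≠ θTX →
      Real.log (μnew k θ / μnew k θ') =
        A k k * Real.log (μprev k θ / μprev k θ') +
          A k k * Real.log (L θ (ξ k) / L θ' (ξ k)) := by
  intro k θ θ' hθ hθ'
  have : Nonempty Θ := Fintype.card_pos_iff.mp (by omega)
  have hS : 0 < ∑ θ'', μprev k θ'' * L θ'' (ξ k) :=
    Finset.sum_pos (fun t _ => mul_pos (hμprev_pos k t) (hL_pos t (ξ k)))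
      Finset.univ_nonempty
  have hψpos : ∀ t, 0 < ψ k t := fun t => by
    rw [hψ]; exact div_pos (mul_pos (hμprev_pos k t) (hL_pos t (ξ k))) hS
  set E : Θ → ℝ := fun t => A k k * Real.log (ψ k t) +
      ∑ ℓ ∈ Finset.univ.erase k, A ℓ k * Real.log (ψhat ℓ t) with hE
  have hZ : 0 < ∑ t, Real.exp (E t) :=
    Finset.sum_pos (fun t _ => Real.exp_pos _) Finset.univ_nonempty
  have hratio : μnew k θ / μnew k θ' = Real.exp (E θ - E θ') := by
    rw [hμnew, hμnew, div_div_div_comm, div_self hZ.ne', div_one, ← Real.exp_sub]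
  have hsame : ∀ ℓ, ψhat ℓ θ = ψhat ℓ θ' := by
    intro ℓ; rw [hψhat, hψhat, if_neg hθ, if_neg hθ']
  have hEdiff : E θ - E θ' = A k k * (Real.log (ψ k θ) - Real.log (ψ k θ')) := by
    simp only [hE]
    have : (∑ ℓ ∈ Finset.univ.erase k, A ℓ k * Real.log (ψhat ℓ θ)) =
        ∑ ℓ ∈ Finset.univ.erase k, A ℓ k * Real.log (ψhat ℓ θ') :=
      Finset.sum_congr rfl (fun ℓ _ => by rw [hsame ℓ])
    rw [this]; ring
  rw [hratio, Real.log_exp, hEdiff]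
  have hlψ : Real.log (ψ k θ) - Real.log (ψ k θ') =
      Real.log (μprev k θ / μprev k θ') + Real.log (L θ (ξ k) / L θ' (ξ k)) := by
    rw [hψ, hψ,
      Real.log_div (mul_pos (hμprev_pos k θ) (hL_pos θ (ξ k))).ne' hS.ne',
      Real.log_div (mul_pos (hμprev_pos k θ') (hL_pos θ' (ξ k))).ne' hS.ne',
      Real.log_mul (hμprev_pos k θ).ne' (hL_pos θ (ξ k)).ne',
      Real.log_mul (hμprev_pos k θ').ne' (hL_pos θ' (ξ k)).ne',
      Real.log_div (hμprev_pos k θ).ne' (hμprev_pos k θ').ne',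
      Real.log_div (hL_pos θ (ξ k)).ne' (hL_pos θ' (ξ k)).ne']
    ring
  rw [hlψ]; ring
end

section
/- (Network time-averaging limit) Let A = (a_{ℓk}) be an N×N left-stochastic primitive matrix with Perron eigenvector v (Av = v, 1ᵀv = 1, v ≻ 0). Let (X_{ℓ,i})_{ℓ=1,…,N; i≥1} be real random variables, independent across i, such that for each ℓ the sequence (X_{ℓ,i})_{i≥1} is identically distributed and integrable with mean m_ℓ. Define y_{k,0} arbitrarily (deterministic reals) and y_{k,i} = Σ_{ℓ=1}^N a_{ℓk}(y_{ℓ,i−1} + X_{ℓ,i}) for i ≥ 1. Then for every k, lim_{i→∞} y_{k,i}/i = Σ_{ℓ=1}^N v_ℓ m_ℓ almost surely. -/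
open MeasureTheory ProbabilityTheory Filter Finset Matrix

namespace NTAL
variable {N : ℕ}

lemma pow_entry_nonneg (A : Matrix (Fin N) (Fin N) ℝ) (h : ∀ ℓ k, 0 ≤ A ℓ k) (n : ℕ) :
    ∀ ℓ k, 0 ≤ (A ^ n) ℓ k := by
  induction n with
  | zero => intro ℓ k; simp [Matrix.one_apply]; split <;> norm_num
  | succ n ih =>
      intro ℓ k
      rw [pow_succ, Matrix.mul_apply]
      exact Finset.sum_nonneg fun j _ => mul_nonneg (ih _ _) (h _ _)

lemma pow_colsum (A : Matrix (Fin N) (Fin N) ℝ) (h : ∀ k, ∑ ℓ, A ℓ k = 1) (n : ℕ) :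
    ∀ k, ∑ ℓ, (A ^ n) ℓ k = 1 := by
  induction n with
  | zero => intro k; simp [Matrix.one_apply]
  | succ n ih =>
      intro k
      simp only [pow_succ, Matrix.mul_apply]
      rw [Finset.sum_comm]
      have : ∀ j ∈ Finset.univ, ∑ ℓ, (A ^ n) ℓ j * A j k = A j k := by
        intro j _
        rw [← Finset.sum_mul, ih j, one_mul]
      rw [Finset.sum_congr rfl this, h k]

lemma pow_mulVec_fixed (A : Matrix (Fin N) (Fin N) ℝ) (v : Fin N → ℝ)
    (h : A.mulVec v = v) (n : ℕ) : (A ^ n).mulVec v = v := by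
  induction n with
  | zero => simp
  | succ n ih => rw [pow_succ', ← Matrix.mulVec_mulVec, ih, h]

lemma vsum_mulVec (C : Matrix (Fin N) (Fin N) ℝ) (v : Fin N → ℝ)
    (hfix : C.mulVec v = v) (u : Fin N → ℝ) :
    ∑ k, v k * Cᵀ.mulVec u k = ∑ ℓ, v ℓ * u ℓ := by
  simp only [Matrix.mulVec, Matrix.transpose_apply, dotProduct, Finset.mul_sum]
  rw [Finset.sum_comm]
  refine Finset.sum_congr rfl fun ℓ _ => ?_
  have : (∑ k, v k * (C ℓ k * u ℓ)) = (∑ k, C ℓ k * v k) * u ℓ := by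
    rw [Finset.sum_mul]; refine Finset.sum_congr rfl fun k _ => by ring
  rw [this]
  have : ∑ k, C ℓ k * v k = v ℓ := by
    have := congrFun hfix ℓ
    simpa [Matrix.mulVec, dotProduct] using this
  rw [this, mul_comm]

lemma step_bound (C : Matrix (Fin N) (Fin N) ℝ) (v : Fin N → ℝ)
    (hC0 : ∀ ℓ k, 0 ≤ C ℓ k) (hCs : ∀ k, ∑ ℓ, C ℓ k = 1)
    (hvs : ∑ ℓ, v ℓ = 1)
    (c : ℝ) (hc : ∀ ℓ k, c * v ℓ ≤ C ℓ k)
    (u : Fin N → ℝ) (hu : ∑ ℓ, v ℓ * u ℓ = 0)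
    (M : ℝ) (hM : ∀ ℓ, |u ℓ| ≤ M) :
    ∀ k, |Cᵀ.mulVec u k| ≤ (1 - c) * M := by
  intro k
  have h1 : Cᵀ.mulVec u k = ∑ ℓ, (C ℓ k - c * v ℓ) * u ℓ := by
    simp only [Matrix.mulVec, Matrix.transpose_apply, dotProduct, sub_mul]
    rw [Finset.sum_sub_distrib]
    have : ∑ ℓ, c * v ℓ * u ℓ = c * ∑ ℓ, v ℓ * u ℓ := by
      rw [Finset.mul_sum]; exact Finset.sum_congr rfl fun ℓ _ => by ring
    rw [this, hu, mul_zero, sub_zero]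
  rw [h1]
  calc |∑ ℓ, (C ℓ k - c * v ℓ) * u ℓ| ≤ ∑ ℓ, |(C ℓ k - c * v ℓ) * u ℓ| :=
        Finset.abs_sum_le_sum_abs _ _
    _ ≤ ∑ ℓ, (C ℓ k - c * v ℓ) * M := by
        refine Finset.sum_le_sum fun ℓ _ => ?_
        rw [abs_mul, abs_of_nonneg (by linarith [hc ℓ k])]
        exact mul_le_mul_of_nonneg_left (hM ℓ) (by linarith [hc ℓ k])
    _ = (1 - c) * M := by
        rw [← Finset.sum_mul, Finset.sum_sub_distrib, hCs k, ← Finset.mul_sum, hvs, mul_one]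


lemma iter_bound (A : Matrix (Fin N) (Fin N) ℝ) (v : Fin N → ℝ)
    (hA0 : ∀ ℓ k, 0 ≤ A ℓ k) (hAs : ∀ k, ∑ ℓ, A ℓ k = 1)
    (hfix : A.mulVec v = v) (hvs : ∑ ℓ, v ℓ = 1)
    (Ms : ℕ) (hMs : 0 < Ms) (c : ℝ) (hc0 : 0 ≤ c) (hc1 : c ≤ 1)
    (hc : ∀ ℓ k, c * v ℓ ≤ (A ^ Ms) ℓ k) :
    ∀ n (u : Fin N → ℝ), (∑ ℓ, v ℓ * u ℓ = 0) → ∀ M, (∀ ℓ, |u ℓ| ≤ M) →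
      ∀ k, |((A ^ n)ᵀ).mulVec u k| ≤ (1 - c) ^ (n / Ms) * M := by
  intro n
  induction n using Nat.strong_induction_on with
  | _ n ih =>
    intro u hu M hM k
    have hM0 : 0 ≤ M := le_trans (abs_nonneg _) (hM k)
    by_cases hn : n < Ms
    · -- nonexpansive regime: n / Ms = 0
      rw [Nat.div_eq_of_lt hn, pow_zero, one_mul]
      have := step_bound (A ^ n) v (pow_entry_nonneg A hA0 n) (pow_colsum A hAs n) hvs 0
        (fun ℓ k => by simpa using pow_entry_nonneg A hA0 n ℓ k) u hu M hM k
      simpa using this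
    · push_neg at hn
      -- n = (n - Ms) + Ms
      have hsplit : (A ^ n)ᵀ.mulVec u = ((A ^ (n - Ms))ᵀ).mulVec (((A ^ Ms)ᵀ).mulVec u) := by
        rw [Matrix.mulVec_mulVec, ← Matrix.transpose_mul, ← pow_add]
        rw [Nat.add_sub_cancel' hn]
      set u' := ((A ^ Ms)ᵀ).mulVec u with hu'def
      have hu' : ∑ ℓ, v ℓ * u' ℓ = 0 := by
        rw [hu'def, vsum_mulVec (A ^ Ms) v (pow_mulVec_fixed A v hfix Ms) u, hu]
      have hM' : ∀ ℓ, |u' ℓ| ≤ (1 - c) * M :=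
        step_bound (A ^ Ms) v (pow_entry_nonneg A hA0 Ms) (pow_colsum A hAs Ms) hvs c hc u hu M hM
      have hlt : n - Ms < n := by omega
      have := ih (n - Ms) hlt u' hu' ((1 - c) * M) hM' k
      rw [hsplit]
      refine le_trans this (le_of_eq ?_)
      rw [← mul_assoc, ← pow_succ]
      congr 1
      rw [Nat.div_eq_sub_div hMs hn]

lemma sum_range_add' (f : ℕ → ℝ) (a b : ℕ) :
    ∑ t ∈ range (a + b), f t = ∑ t ∈ range a, f t + ∑ t ∈ range b, f (a + t) := by
  induction b with
  | zero => simp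
  | succ b ih => rw [← Nat.add_assoc, Finset.sum_range_succ, ih, Finset.sum_range_succ]; ring

lemma rsum_le (Ms : ℕ) (hMs : 0 < Ms) (c : ℝ) (hc0 : 0 < c) (hc1 : c ≤ 1) (i : ℕ) :
    ∑ t ∈ range i, (1 - c) ^ (t / Ms) ≤ Ms / c := by
  have hx0 : (0:ℝ) ≤ 1 - c := by linarith
  have hx1 : 1 - c < 1 := by linarith
  have h1 : ∑ t ∈ range i, (1 - c) ^ (t / Ms) ≤ ∑ t ∈ range (Ms * i), (1 - c) ^ (t / Ms) :=
    Finset.sum_le_sum_of_subset_of_nonneg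
      (Finset.range_subset_range.2 (Nat.le_mul_of_pos_left i hMs))
      (fun t _ _ => pow_nonneg hx0 _)
  have h2 : ∀ S : ℕ, ∑ t ∈ range (Ms * S), (1 - c) ^ (t / Ms)
      = (Ms : ℝ) * ∑ s ∈ range S, (1 - c) ^ s := by
    intro S
    induction S with
    | zero => simp
    | succ S ih =>
        rw [Nat.mul_succ, sum_range_add' _ _ Ms, ih, Finset.sum_range_succ]
        have : ∀ t ∈ range Ms, (1 - c) ^ ((Ms * S + t) / Ms) = (1 - c) ^ S := by
          intro t ht
          rw [Nat.mul_add_div hMs, Nat.div_eq_of_lt (Finset.mem_range.1 ht), add_zero]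
        rw [Finset.sum_congr rfl this, Finset.sum_const, Finset.card_range]
        push_cast; ring
  have h3 : ∑ s ∈ range i, (1 - c) ^ s ≤ (1 - (1 - c))⁻¹ :=
    sum_le_hasSum _ (fun j _ => pow_nonneg hx0 _) (hasSum_geometric_of_lt_one hx0 hx1)
  calc ∑ t ∈ range i, (1 - c) ^ (t / Ms) ≤ (Ms : ℝ) * ∑ s ∈ range i, (1 - c) ^ s := by
        rw [← h2 i]; exact h1
    _ ≤ (Ms : ℝ) * (1 - (1 - c))⁻¹ := by
        exact mul_le_mul_of_nonneg_left h3 (Nat.cast_nonneg Ms)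
    _ = Ms / c := by rw [sub_sub_cancel]; rw [div_eq_mul_inv]

lemma diff_div_tendsto (S : ℕ → ℝ) (L : ℝ)
    (h : Tendsto (fun n : ℕ => S n / n) atTop (nhds L)) :
    Tendsto (fun n : ℕ => (S (n + 1) - S n) / (n + 1)) atTop (nhds 0) := by
  have h1 : Tendsto (fun n : ℕ => S (n + 1) / (n + 1)) atTop (nhds L) := by
    have h' := h.comp (tendsto_add_atTop_nat 1)
    refine h'.congr fun n => ?_
    simp only [Function.comp]
    push_cast
    ring_nf
  have h2 : Tendsto (fun n : ℕ => (n : ℝ) / (n + 1)) atTop (nhds 1) := by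
    have h3 : Tendsto (fun n : ℕ => 1 - 1 / ((n:ℝ) + 1)) atTop (nhds 1) := by
      simpa using (tendsto_const_nhds (x := (1:ℝ))).sub tendsto_one_div_add_atTop_nhds_zero_nat
    refine h3.congr fun n => ?_
    have hn : (n : ℝ) + 1 ≠ 0 := by positivity
    field_simp; ring
  have h4 : Tendsto (fun n : ℕ => S (n + 1) / (n + 1) - S n / n * ((n : ℝ) / (n + 1)))
      atTop (nhds 0) := by
    have := h1.sub (h.mul h2)
    simpa using this
  refine h4.congr' ?_
  filter_upwards [eventually_ge_atTop 1] with n hn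
  have hn0 : (n : ℝ) ≠ 0 := by positivity
  have hn1 : (n : ℝ) + 1 ≠ 0 := by positivity
  field_simp
  try ring

lemma cesaro_conv (Ms : ℕ) (hMs : 0 < Ms) (c : ℝ) (hc0 : 0 < c) (hc1 : c ≤ 1)
    (cseq : ℕ → ℝ) (hcs0 : ∀ j, 0 ≤ cseq j)
    (hlim : Tendsto (fun j : ℕ => cseq (j + 1) / (j + 1)) atTop (nhds 0)) :
    Tendsto (fun i : ℕ =>
      (∑ j ∈ range i, (1 - c) ^ ((i - 1 - j) / Ms) * cseq (j + 1)) / i) atTop (nhds 0) := by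
  have hx0 : (0:ℝ) ≤ 1 - c := by linarith
  have hr1 : ∀ t : ℕ, (1 - c : ℝ) ^ (t / Ms) ≤ 1 := fun t => pow_le_one₀ hx0 (by linarith)
  have hr0 : ∀ t : ℕ, (0:ℝ) ≤ (1 - c) ^ (t / Ms) := fun t => pow_nonneg hx0 _
  rw [NormedAddCommGroup.tendsto_nhds_zero]
  intro ε hε
  set R : ℝ := Ms / c with hR
  have hRpos : 0 < R := by positivity
  set ε' : ℝ := ε / (2 * R) with hε'
  have hε'pos : 0 < ε' := by positivity
  -- tail control
  have := (NormedAddCommGroup.tendsto_nhds_zero.1 hlim) ε' hε'pos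
  rw [eventually_atTop] at this
  obtain ⟨J, hJ⟩ := this
  -- head constant
  set H : ℝ := ∑ j ∈ range J, cseq (j + 1) with hH
  have hH0 : 0 ≤ H := Finset.sum_nonneg fun j _ => hcs0 _
  have hHlim : Tendsto (fun i : ℕ => H / i) atTop (nhds 0) :=
    tendsto_const_div_atTop_nhds_zero_nat H
  have hHev := (NormedAddCommGroup.tendsto_nhds_zero.1 hHlim) (ε/2) (by positivity)
  rw [eventually_atTop] at hHev
  obtain ⟨I₀, hI₀⟩ := hHev
  rw [eventually_atTop]
  refine ⟨max (max I₀ J) 1, fun i hi => ?_⟩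
  have hiI₀ : I₀ ≤ i := le_trans (le_trans (le_max_left _ _) (le_max_left _ _)) hi
  have hiJ : J ≤ i := le_trans (le_trans (le_max_right _ _) (le_max_left _ _)) hi
  have hi1 : 1 ≤ i := le_trans (le_max_right _ _) hi
  have hipos : (0:ℝ) < i := by exact_mod_cast hi1
  -- bound the sum
  have key : ∑ j ∈ range i, (1 - c) ^ ((i - 1 - j) / Ms) * cseq (j + 1)
      ≤ H + ε' * i * R := by
    rw [← Finset.sum_range_add_sum_Ico _ hiJ]
    have head_le : ∑ j ∈ range J, (1 - c) ^ ((i - 1 - j) / Ms) * cseq (j + 1) ≤ H := by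
      refine Finset.sum_le_sum fun j _ => ?_
      calc (1 - c) ^ ((i - 1 - j) / Ms) * cseq (j + 1) ≤ 1 * cseq (j + 1) :=
            mul_le_mul_of_nonneg_right (hr1 _) (hcs0 _)
        _ = cseq (j + 1) := one_mul _
    have tail_le : ∑ j ∈ Finset.Ico J i, (1 - c) ^ ((i - 1 - j) / Ms) * cseq (j + 1)
        ≤ ε' * i * R := by
      have step : ∀ j ∈ Finset.Ico J i, (1 - c) ^ ((i - 1 - j) / Ms) * cseq (j + 1)
          ≤ (ε' * i) * (1 - c) ^ ((i - 1 - j) / Ms) := by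
        intro j hj
        obtain ⟨hj1, hj2⟩ := Finset.mem_Ico.1 hj
        have hcj : cseq (j + 1) ≤ ε' * (j + 1) := by
          have := hJ j hj1
          rw [Real.norm_eq_abs, abs_div, abs_of_nonneg (hcs0 _)] at this
          have hpos : (0:ℝ) < (j:ℝ) + 1 := by positivity
          rw [abs_of_pos hpos] at this
          calc cseq (j+1) = cseq (j+1) / ((j:ℝ)+1) * ((j:ℝ)+1) := by field_simp
            _ ≤ ε' * ((j:ℝ)+1) := mul_le_mul_of_nonneg_right (le_of_lt this) (by positivity)
        have hji : (j:ℝ) + 1 ≤ i := by exact_mod_cast Nat.succ_le_of_lt hj2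
        calc (1 - c) ^ ((i - 1 - j) / Ms) * cseq (j + 1)
            ≤ (1 - c) ^ ((i - 1 - j) / Ms) * (ε' * ((j:ℝ)+1)) :=
              mul_le_mul_of_nonneg_left hcj (hr0 _)
          _ ≤ (1 - c) ^ ((i - 1 - j) / Ms) * (ε' * i) := by
              refine mul_le_mul_of_nonneg_left ?_ (hr0 _)
              exact mul_le_mul_of_nonneg_left hji (le_of_lt hε'pos)
          _ = (ε' * i) * (1 - c) ^ ((i - 1 - j) / Ms) := by ring
      calc ∑ j ∈ Finset.Ico J i, (1 - c) ^ ((i - 1 - j) / Ms) * cseq (j + 1)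
          ≤ ∑ j ∈ Finset.Ico J i, (ε' * i) * (1 - c) ^ ((i - 1 - j) / Ms) :=
            Finset.sum_le_sum step
        _ = (ε' * i) * ∑ j ∈ Finset.Ico J i, (1 - c) ^ ((i - 1 - j) / Ms) := by
            rw [Finset.mul_sum]
        _ ≤ (ε' * i) * R := by
            refine mul_le_mul_of_nonneg_left ?_ (by positivity)
            calc ∑ j ∈ Finset.Ico J i, (1 - c) ^ ((i - 1 - j) / Ms)
                ≤ ∑ j ∈ range i, (1 - c) ^ ((i - 1 - j) / Ms) := by
                  refine Finset.sum_le_sum_of_subset_of_nonneg ?_ (fun t _ _ => hr0 _)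
                  rw [Finset.range_eq_Ico]
                  exact Finset.Ico_subset_Ico (Nat.zero_le _) le_rfl
              _ = ∑ t ∈ range i, (1 - c) ^ (t / Ms) := by
                  rw [Finset.sum_range_reflect (fun t => (1 - c) ^ (t / Ms)) i]
              _ ≤ R := rsum_le Ms hMs c hc0 hc1 i
        _ = ε' * i * R := by ring
    linarith
  have hnn : 0 ≤ ∑ j ∈ range i, (1 - c) ^ ((i - 1 - j) / Ms) * cseq (j + 1) :=
    Finset.sum_nonneg fun j _ => mul_nonneg (hr0 _) (hcs0 _)
  rw [Real.norm_eq_abs, abs_div, abs_of_nonneg hnn, abs_of_pos hipos]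
  have h5 : (∑ j ∈ range i, (1 - c) ^ ((i - 1 - j) / Ms) * cseq (j + 1)) / i
      ≤ (H + ε' * i * R) / i := by gcongr
  have h6 : (H + ε' * i * R) / i = H / i + ε' * R := by field_simp
  have h7 : H / i < ε / 2 := by
    have := hI₀ i hiI₀
    rw [Real.norm_eq_abs, abs_of_nonneg (div_nonneg hH0 (le_of_lt hipos))] at this
    exact this
  have h8 : ε' * R = ε / 2 := by
    rw [hε']
    field_simp
  linarith

lemma slln_coord {N : ℕ} {Ω : Type*} [MeasurableSpace Ω] (P : Measure Ω) [IsProbabilityMeasure P]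
    (Xv : Fin N → ℕ → Ω → ℝ)
    (hX_indep : iIndepFun
      (fun i ω ℓ => Xv ℓ i ω) P)
    (hX_ident : ∀ ℓ i, IdentDistrib (Xv ℓ i) (Xv ℓ 0) P P)
    (hX_int : ∀ ℓ, Integrable (Xv ℓ 0) P)
    (m : Fin N → ℝ) (hm : ∀ ℓ, m ℓ = ∫ ω, Xv ℓ 0 ω ∂P) (ℓ : Fin N) :
    ∀ᵐ ω ∂P, Tendsto (fun n : ℕ => (∑ j ∈ range n, Xv ℓ (j + 1) ω) / n) atTop (nhds (m ℓ)) := by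
  have hpair : Pairwise (Function.onFun (IndepFun · · P) (fun i => Xv ℓ (i + 1))) := by
    intro i j hij
    have h := hX_indep.indepFun (show i + 1 ≠ j + 1 by omega)
    exact h.comp (measurable_pi_apply ℓ) (measurable_pi_apply ℓ)
  have hident : ∀ i, IdentDistrib (Xv ℓ (i + 1)) (Xv ℓ 1) P P :=
    fun i => (hX_ident ℓ (i + 1)).trans (hX_ident ℓ 1).symm
  have hint : Integrable (Xv ℓ 1) P := (hX_ident ℓ 1).integrable_iff.2 (hX_int ℓ)
  have h := strong_law_ae_real (fun i => Xv ℓ (i + 1)) hint hpair hident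
  have hmean : ∫ ω, Xv ℓ 1 ω ∂P = m ℓ := by
    rw [hm ℓ]; exact (hX_ident ℓ 1).integral_eq
  rw [hmean] at h
  exact h

lemma div_nat_mono {a b : ℝ} (n : ℕ) (h : a ≤ b) : a / (n : ℝ) ≤ b / (n : ℝ) := by
  rcases Nat.eq_zero_or_pos n with hn | hn
  · simp [hn]
  · have : (0:ℝ) < n := by exact_mod_cast hn
    gcongr

lemma mulVecT_apply (C : Matrix (Fin N) (Fin N) ℝ) (u : Fin N → ℝ) (k : Fin N) :
    Cᵀ.mulVec u k = ∑ ℓ, C ℓ k * u ℓ := by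
  simp [Matrix.mulVec, dotProduct, Matrix.transpose_apply]

lemma main_det
    (A : Matrix (Fin N) (Fin N) ℝ)
    (hA_nonneg : ∀ ℓ k, 0 ≤ A ℓ k)
    (hA_stoch : ∀ k, ∑ ℓ, A ℓ k = 1)
    (v : Fin N → ℝ)
    (hv_eig : A.mulVec v = v)
    (hv_sum : ∑ ℓ, v ℓ = 1)
    (hv_nonneg : ∀ ℓ, 0 ≤ v ℓ)
    (Ms : ℕ) (hMs : 0 < Ms)
    (c : ℝ) (hc_pos : 0 < c) (hc_le1 : c ≤ 1)
    (hc_le : ∀ ℓ k, c * v ℓ ≤ (A ^ Ms) ℓ k)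
    (Xh : ℕ → Fin N → ℝ) (z : ℕ → Fin N → ℝ)
    (hzrec : ∀ i k, z (i + 1) k = ∑ ℓ, A ℓ k * (z i ℓ + Xh (i + 1) ℓ))
    (μ : ℝ)
    (hslim : Tendsto (fun i : ℕ =>
      (∑ j ∈ range i, ∑ ℓ, v ℓ * Xh (j + 1) ℓ) / i) atTop (nhds μ))
    (hXlim : ∀ ℓ, Tendsto (fun n : ℕ => Xh (n + 1) ℓ / (n + 1)) atTop (nhds 0))
    (k : Fin N) :
    Tendsto (fun i : ℕ => z i k / i) atTop (nhds μ) := by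
  have hx0 : (0:ℝ) ≤ 1 - c := by linarith
  -- scalar process
  set s : ℕ → ℝ := fun i => ∑ ℓ, v ℓ * z i ℓ with hsdef
  have hsrec : ∀ i, s (i + 1) = s i + ∑ ℓ, v ℓ * Xh (i + 1) ℓ := by
    intro i
    have h1 : s (i + 1) = ∑ q, v q * Aᵀ.mulVec (fun ℓ => z i ℓ + Xh (i + 1) ℓ) q := by
      refine Finset.sum_congr rfl fun q _ => ?_
      rw [mulVecT_apply]
      congr 1
      exact hzrec i q
    rw [h1, vsum_mulVec A v hv_eig]
    rw [← Finset.sum_add_distrib]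
    exact Finset.sum_congr rfl fun ℓ _ => mul_add _ _ _
  have hs_sum : ∀ i, s i = s 0 + ∑ j ∈ range i, ∑ ℓ, v ℓ * Xh (j + 1) ℓ := by
    intro i
    induction i with
    | zero => simp
    | succ i ih => rw [hsrec i, ih, Finset.sum_range_succ]; ring
  -- noise vectors
  set ξ : ℕ → Fin N → ℝ :=
    fun j q => (∑ ℓ, A ℓ q * Xh j ℓ) - ∑ ℓ, v ℓ * Xh j ℓ with hξdef
  set w0 : Fin N → ℝ := fun ℓ => z 0 ℓ - s 0 with hw0def
  -- recursion for the centered process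
  have hw_rec : ∀ i q, z (i + 1) q - s (i + 1)
      = (∑ ℓ, A ℓ q * (z i ℓ - s i)) + ξ (i + 1) q := by
    intro i q
    rw [hzrec i q, hsrec i]
    simp only [hξdef]
    have e1 : ∑ ℓ, A ℓ q * (z i ℓ + Xh (i + 1) ℓ)
        = (∑ ℓ, A ℓ q * z i ℓ) + ∑ ℓ, A ℓ q * Xh (i + 1) ℓ := by
      rw [← Finset.sum_add_distrib]
      exact Finset.sum_congr rfl fun ℓ _ => mul_add _ _ _
    have e2 : ∑ ℓ, A ℓ q * (z i ℓ - s i) = (∑ ℓ, A ℓ q * z i ℓ) - s i := by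
      have h4 : ∑ ℓ, A ℓ q * (z i ℓ - s i)
          = (∑ ℓ, A ℓ q * z i ℓ) - (∑ ℓ, A ℓ q) * s i := by
        rw [Finset.sum_mul, ← Finset.sum_sub_distrib]
        exact Finset.sum_congr rfl fun ℓ _ => by ring
      rw [h4, hA_stoch q, one_mul]
    rw [e1, e2]
    ring
  -- solution formula
  have step_pow : ∀ (p : ℕ) (u : Fin N → ℝ) (q : Fin N),
      ∑ ℓ, A ℓ q * ((A ^ p)ᵀ.mulVec u) ℓ = ((A ^ (p + 1))ᵀ).mulVec u q := by
    intro p u q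
    have h1 : ∑ ℓ, A ℓ q * ((A ^ p)ᵀ.mulVec u) ℓ = Aᵀ.mulVec ((A ^ p)ᵀ.mulVec u) q := by
      rw [mulVecT_apply]
    rw [h1, Matrix.mulVec_mulVec, ← Matrix.transpose_mul, ← pow_succ]
  have hw_sol : ∀ i q, z i q - s i
      = ((A ^ i)ᵀ).mulVec w0 q
        + ∑ j ∈ range i, ((A ^ (i - 1 - j))ᵀ).mulVec (ξ (j + 1)) q := by
    intro i
    induction i with
    | zero => intro q; simp [hw0def]
    | succ i ih =>
        intro q
        rw [hw_rec i q]
        have e1 : ∑ ℓ, A ℓ q * (z i ℓ - s i)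
            = (∑ ℓ, A ℓ q * ((A ^ i)ᵀ).mulVec w0 ℓ)
              + ∑ j ∈ range i, ∑ ℓ, A ℓ q * ((A ^ (i - 1 - j))ᵀ).mulVec (ξ (j + 1)) ℓ := by
          have h0 : ∀ ℓ ∈ Finset.univ, A ℓ q * (z i ℓ - s i)
              = A ℓ q * ((A ^ i)ᵀ).mulVec w0 ℓ
                + ∑ j ∈ range i, A ℓ q * ((A ^ (i - 1 - j))ᵀ).mulVec (ξ (j + 1)) ℓ := by
            intro ℓ _
            rw [ih ℓ, mul_add, Finset.mul_sum]
          rw [Finset.sum_congr rfl h0, Finset.sum_add_distrib, Finset.sum_comm]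
        rw [e1, step_pow i w0 q]
        have e3 : ∀ j ∈ range i, ∑ ℓ, A ℓ q * ((A ^ (i - 1 - j))ᵀ).mulVec (ξ (j + 1)) ℓ
            = ((A ^ (i - j))ᵀ).mulVec (ξ (j + 1)) q := by
          intro j hj
          rw [step_pow (i - 1 - j) (ξ (j + 1)) q]
          have h5 : i - 1 - j + 1 = i - j := by
            have := Finset.mem_range.1 hj
            omega
          rw [h5]
        rw [Finset.sum_congr rfl e3, Finset.sum_range_succ]
        have e4 : ∀ j : ℕ, i + 1 - 1 - j = i - j := fun j => by omega
        simp only [e4, Nat.sub_self, pow_zero, Matrix.transpose_one, Matrix.one_mulVec]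
        ring
  -- bounds
  set W0 : ℝ := ∑ ℓ, |w0 ℓ| with hW0def
  have hW0nn : 0 ≤ W0 := Finset.sum_nonneg fun ℓ _ => abs_nonneg _
  have hW0 : ∀ ℓ, |w0 ℓ| ≤ W0 :=
    fun ℓ => Finset.single_le_sum (fun ℓ' _ => abs_nonneg (w0 ℓ')) (Finset.mem_univ ℓ)
  have hvw0 : ∑ ℓ, v ℓ * w0 ℓ = 0 := by
    have : ∑ ℓ, v ℓ * w0 ℓ = (∑ ℓ, v ℓ * z 0 ℓ) - (∑ ℓ, v ℓ) * s 0 := by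
      rw [Finset.sum_mul, ← Finset.sum_sub_distrib]
      refine Finset.sum_congr rfl fun ℓ _ => by simp only [hw0def]; ring
    rw [this, hv_sum, one_mul, hsdef]
    ring
  have hvξ : ∀ j, ∑ ℓ, v ℓ * ξ j ℓ = 0 := by
    intro j
    have h1 : ∑ q, v q * ξ j q
        = (∑ q, v q * Aᵀ.mulVec (Xh j) q) - (∑ q, v q) * ∑ ℓ, v ℓ * Xh j ℓ := by
      rw [Finset.sum_mul, ← Finset.sum_sub_distrib]
      refine Finset.sum_congr rfl fun q _ => ?_
      simp only [hξdef]
      rw [mulVecT_apply]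
      ring
    rw [h1, vsum_mulVec A v hv_eig, hv_sum, one_mul, sub_self]
  set cseq : ℕ → ℝ := fun j => 2 * ∑ ℓ, |Xh j ℓ| with hcseqdef
  have hcs0 : ∀ j, 0 ≤ cseq j := fun j => by
    simp only [hcseqdef]
    positivity
  have hA_le1 : ∀ ℓ q, A ℓ q ≤ 1 := by
    intro ℓ q
    rw [← hA_stoch q]
    exact Finset.single_le_sum (fun ℓ' _ => hA_nonneg ℓ' q) (Finset.mem_univ ℓ)
  have hv_le1 : ∀ ℓ, v ℓ ≤ 1 := by
    intro ℓ
    rw [← hv_sum]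
    exact Finset.single_le_sum (fun ℓ' _ => hv_nonneg ℓ') (Finset.mem_univ ℓ)
  have hξbd : ∀ j q, |ξ j q| ≤ cseq j := by
    intro j q
    simp only [hξdef, hcseqdef]
    have h1 : |∑ ℓ, A ℓ q * Xh j ℓ| ≤ ∑ ℓ, |Xh j ℓ| := by
      refine le_trans (Finset.abs_sum_le_sum_abs _ _) (Finset.sum_le_sum fun ℓ _ => ?_)
      rw [abs_mul, abs_of_nonneg (hA_nonneg ℓ q)]
      exact mul_le_of_le_one_left (abs_nonneg _) (hA_le1 ℓ q)
    have h2 : |∑ ℓ, v ℓ * Xh j ℓ| ≤ ∑ ℓ, |Xh j ℓ| := by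
      refine le_trans (Finset.abs_sum_le_sum_abs _ _) (Finset.sum_le_sum fun ℓ _ => ?_)
      rw [abs_mul, abs_of_nonneg (hv_nonneg ℓ)]
      exact mul_le_of_le_one_left (abs_nonneg _) (hv_le1 ℓ)
    calc |(∑ ℓ, A ℓ q * Xh j ℓ) - ∑ ℓ, v ℓ * Xh j ℓ|
        ≤ |∑ ℓ, A ℓ q * Xh j ℓ| + |∑ ℓ, v ℓ * Xh j ℓ| := abs_sub _ _
      _ ≤ 2 * ∑ ℓ, |Xh j ℓ| := by linarith
  have hwbd : ∀ i, |z i k - s i|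
      ≤ (1 - c) ^ (i / Ms) * W0
        + ∑ j ∈ range i, (1 - c) ^ ((i - 1 - j) / Ms) * cseq (j + 1) := by
    intro i
    rw [hw_sol i k]
    have h1 : |((A ^ i)ᵀ).mulVec w0 k| ≤ (1 - c) ^ (i / Ms) * W0 :=
      iter_bound A v hA_nonneg hA_stoch hv_eig hv_sum Ms hMs c (le_of_lt hc_pos) hc_le1
        hc_le i w0 hvw0 W0 hW0 k
    have h2 : |∑ j ∈ range i, ((A ^ (i - 1 - j))ᵀ).mulVec (ξ (j + 1)) k|
        ≤ ∑ j ∈ range i, (1 - c) ^ ((i - 1 - j) / Ms) * cseq (j + 1) := by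
      refine le_trans (Finset.abs_sum_le_sum_abs _ _) (Finset.sum_le_sum fun j _ => ?_)
      exact iter_bound A v hA_nonneg hA_stoch hv_eig hv_sum Ms hMs c (le_of_lt hc_pos)
        hc_le1 hc_le (i - 1 - j) (ξ (j + 1)) (hvξ (j + 1)) (cseq (j + 1))
        (fun ℓ => hξbd (j + 1) ℓ) k
    calc |((A ^ i)ᵀ).mulVec w0 k + ∑ j ∈ range i, ((A ^ (i - 1 - j))ᵀ).mulVec (ξ (j + 1)) k|
        ≤ |((A ^ i)ᵀ).mulVec w0 k| + |∑ j ∈ range i, ((A ^ (i - 1 - j))ᵀ).mulVec (ξ (j + 1)) k| :=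
          abs_add_le _ _
      _ ≤ _ := add_le_add h1 h2
  -- limits
  have hclim : Tendsto (fun j : ℕ => cseq (j + 1) / (j + 1)) atTop (nhds 0) := by
    have h1 : ∀ ℓ, Tendsto (fun n : ℕ => |Xh (n + 1) ℓ| / (n + 1)) atTop (nhds 0) := by
      intro ℓ
      have := (hXlim ℓ).abs
      rw [abs_zero] at this
      refine this.congr fun n => ?_
      rw [abs_div, abs_of_pos (show (0:ℝ) < (n:ℝ) + 1 by positivity)]
    have h2 : Tendsto (fun n : ℕ => ∑ ℓ, |Xh (n + 1) ℓ| / (n + 1)) atTop (nhds 0) := by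
      have := tendsto_finset_sum Finset.univ (fun ℓ _ => h1 ℓ)
      simpa using this
    have h3 := h2.const_mul (2:ℝ)
    rw [mul_zero] at h3
    refine h3.congr fun n => ?_
    simp only [hcseqdef]
    rw [mul_div_assoc, Finset.sum_div]
  have hT1 : Tendsto (fun i : ℕ => ((1 - c) ^ (i / Ms) * W0) / i) atTop (nhds 0) := by
    refine squeeze_zero (fun i => by positivity) (fun i => ?_)
      (tendsto_const_div_atTop_nhds_zero_nat W0)
    refine div_nat_mono i ?_
    exact mul_le_of_le_one_left hW0nn (pow_le_one₀ hx0 (by linarith))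
  have hT2 := cesaro_conv Ms hMs c hc_pos hc_le1 cseq hcs0 hclim
  have hwlim : Tendsto (fun i : ℕ => (z i k - s i) / i) atTop (nhds 0) := by
    have hg := hT1.add hT2
    rw [add_zero] at hg
    refine squeeze_zero_norm (fun i => ?_) (hg.congr fun i => (add_div _ _ _).symm)
    rw [Real.norm_eq_abs, abs_div, Nat.abs_cast]
    exact div_nat_mono i (hwbd i)
  have hs_lim : Tendsto (fun i : ℕ => s i / i) atTop (nhds μ) := by
    have h0 : Tendsto (fun i : ℕ => s 0 / i) atTop (nhds 0) :=
      tendsto_const_div_atTop_nhds_zero_nat (s 0)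
    have := h0.add hslim
    rw [zero_add] at this
    refine this.congr fun i => ?_
    rw [hs_sum i, add_div]
  have := hwlim.add hs_lim
  rw [zero_add] at this
  refine this.congr fun i => ?_
  rw [← add_div, sub_add_cancel]

end NTAL

open MeasureTheory ProbabilityTheory Filter

/-- Network time-averaging limit.
Let `A` be an `N×N` left-stochastic primitive matrix with Perron eigenvector `v`. Let
`(X_(ℓ,i))` be real random variables, independent across the time index `i`, such that for
each `ℓ` the sequence `(X_(ℓ,i))_i` is identically distributed and integrable with mean
`m_ℓ`. If `y_(k,0)` are deterministic reals and
`y_(k,i+1) = ∑_ℓ a_(ℓk) (y_(ℓ,i) + X_(ℓ,i+1))`, then for every `k`,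
`y_(k,i)/i → ∑_ℓ v_ℓ m_ℓ` almost surely. -/
theorem network_time_averaging_limit
    {N : ℕ} (hN : 0 < N)
    (A : Matrix (Fin N) (Fin N) ℝ)
    (hA_nonneg : ∀ ℓ k, 0 ≤ A ℓ k)
    (hA_stoch : ∀ k, ∑ ℓ, A ℓ k = 1)
    (hA_prim : ∃ m : ℕ, ∀ ℓ k, 0 < (A ^ m) ℓ k)
    (v : Fin N → ℝ)
    (hv_eig : A.mulVec v = v)
    (hv_sum : ∑ ℓ, v ℓ = 1)
    (hv_pos : ∀ ℓ, 0 < v ℓ)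
    {Ω : Type*} [MeasurableSpace Ω] (P : Measure Ω) [IsProbabilityMeasure P]
    (Xv : Fin N → ℕ → Ω → ℝ)
    (hX_meas : ∀ ℓ i, Measurable (Xv ℓ i))
    -- independence across the time index of the joint vectors `(X_(1,i), …, X_(N,i))`
    (hX_indep : iIndepFun
      (fun i ω ℓ => Xv ℓ i ω) P)
    -- for each agent, identically distributed across time
    (hX_ident : ∀ ℓ i, IdentDistrib (Xv ℓ i) (Xv ℓ 0) P P)
    -- integrability and means
    (hX_int : ∀ ℓ, Integrable (Xv ℓ 0) P)
    (m : Fin N → ℝ) (hm : ∀ ℓ, m ℓ = ∫ ω, Xv ℓ 0 ω ∂P)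
    -- the recursion, with deterministic initialization `y0`
    (y0 : Fin N → ℝ)
    (y : Fin N → ℕ → Ω → ℝ)
    (hy0 : ∀ k ω, y k 0 ω = y0 k)
    (hy : ∀ k i ω, y k (i + 1) ω = ∑ ℓ, A ℓ k * (y ℓ i ω + Xv ℓ (i + 1) ω)) :
    ∀ k, ∀ᵐ ω ∂P,
      Tendsto (fun i : ℕ => y k i ω / (i : ℝ)) atTop (nhds (∑ ℓ, v ℓ * m ℓ)) := by
  intro k
  haveI hNe : Nonempty (Fin N) := ⟨⟨0, hN⟩⟩
  obtain ⟨m₀, hm₀⟩ := hA_prim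
  have hApow_pos : ∀ p q, 0 < (A ^ (m₀ + 1)) p q := by
    intro p q
    have hcol : ∃ j, 0 < A j q := by
      by_contra hcon
      push_neg at hcon
      have hz : ∑ ℓ, A ℓ q = 0 :=
        Finset.sum_eq_zero fun j _ => le_antisymm (hcon j) (hA_nonneg j q)
      rw [hA_stoch q] at hz
      norm_num at hz
    obtain ⟨j, hj⟩ := hcol
    have he : (A ^ (m₀ + 1)) p q = ∑ j', (A ^ m₀) p j' * A j' q := by
      rw [pow_succ, Matrix.mul_apply]
    rw [he]
    have hterm : 0 < (A ^ m₀) p j * A j q := mul_pos (hm₀ p j) hj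
    refine lt_of_lt_of_le hterm ?_
    exact Finset.single_le_sum
      (fun j' _ => mul_nonneg (le_of_lt (hm₀ p j')) (hA_nonneg j' q)) (Finset.mem_univ j)
  set Ms := m₀ + 1 with hMsdef
  have hMs : 0 < Ms := Nat.succ_pos _
  set c : ℝ := Finset.univ.inf' Finset.univ_nonempty
      (fun p : Fin N × Fin N => (A ^ Ms) p.1 p.2 / v p.1) with hcdef
  have hc_pos : 0 < c := by
    rw [hcdef, Finset.lt_inf'_iff]
    exact fun p _ => div_pos (hApow_pos p.1 p.2) (hv_pos p.1)
  have hc_le : ∀ ℓ' k', c * v ℓ' ≤ (A ^ Ms) ℓ' k' := by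
    intro ℓ' k'
    have h1 : c ≤ (A ^ Ms) ℓ' k' / v ℓ' :=
      Finset.inf'_le _ (Finset.mem_univ (ℓ', k'))
    exact (le_div_iff₀ (hv_pos ℓ')).1 h1
  have hc_le1 : c ≤ 1 := by
    obtain ⟨k0⟩ := hNe
    have hsum := NTAL.pow_colsum A hA_stoch Ms k0
    have h1 : ∑ ℓ', c * v ℓ' ≤ ∑ ℓ', (A ^ Ms) ℓ' k0 :=
      Finset.sum_le_sum fun ℓ' _ => hc_le ℓ' k0
    rw [hsum, ← Finset.mul_sum, hv_sum, mul_one] at h1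
    exact h1
  have hae : ∀ᵐ ω ∂P, ∀ ℓ,
      Tendsto (fun n : ℕ => (∑ j ∈ Finset.range n, Xv ℓ (j + 1) ω) / n) atTop (nhds (m ℓ)) :=
    ae_all_iff.2 fun ℓ => NTAL.slln_coord P Xv hX_indep hX_ident hX_int m hm ℓ
  filter_upwards [hae] with ω hω
  have hXlim : ∀ ℓ, Tendsto (fun n : ℕ => Xv ℓ (n + 1) ω / (n + 1)) atTop (nhds 0) := by
    intro ℓ
    have h := NTAL.diff_div_tendsto (fun n => ∑ j ∈ Finset.range n, Xv ℓ (j + 1) ω) (m ℓ) (hω ℓ)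
    refine h.congr fun n => ?_
    congr 1
    simp only [Finset.sum_range_succ]
    ring
  have hslim : Tendsto (fun i : ℕ =>
      (∑ j ∈ Finset.range i, ∑ ℓ, v ℓ * Xv ℓ (j + 1) ω) / i) atTop
      (nhds (∑ ℓ, v ℓ * m ℓ)) := by
    have h1 : Tendsto (fun i : ℕ => ∑ ℓ, v ℓ * ((∑ j ∈ Finset.range i, Xv ℓ (j + 1) ω) / i))
        atTop (nhds (∑ ℓ, v ℓ * m ℓ)) :=
      tendsto_finset_sum _ fun ℓ _ => (hω ℓ).const_mul (v ℓ)
    refine h1.congr fun i => ?_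
    rw [Finset.sum_comm, Finset.sum_div]
    refine Finset.sum_congr rfl fun ℓ _ => ?_
    rw [← Finset.mul_sum, mul_div_assoc]
  exact NTAL.main_det A hA_nonneg hA_stoch v hv_eig hv_sum (fun ℓ => (hv_pos ℓ).le)
    Ms hMs c hc_pos hc_le1 hc_le (fun j ℓ => Xv ℓ j ω) (fun i k' => y k' i ω)
    (fun i k' => hy k' i ω) _ hslim hXlim k
end
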